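/- arXiv:1912.09725 — 8 statements merged into one kernel-verified Lean document; each statement's English description precedes it below -/
import Mathlib

section
/- Let v ∈ R^k be a vector whose coordinates v^(1), ..., v^(k) are linearly independent over Q, with v^(1) > 0. Then for every ε > 0 there exist vectors u_1, ..., u_k ∈ Z^k such that: (1) (u_1, ..., u_k) is a Z-basis of Z^k; (2) v = α_1 u_1 + ... + α_k u_k with all α_i > 0; (3) the angular distance between the ray through v and the ray through u_i is less than ε for each i; (4) the first coordinate of each u_i is positive. -/
open Finset Real
open scoped RealInnerProductSpace

namespace Stmt1Aux

variable {k : ℕ}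

/-- The open cone `{x | c‖x‖ < ⟪v,x⟫}`. -/
def inK (v : EuclideanSpace ℝ (Fin k)) (c : ℝ) (x : EuclideanSpace ℝ (Fin k)) : Prop :=
  c * ‖x‖ < ⟪v, x⟫

lemma inK.ne_zero {v x : EuclideanSpace ℝ (Fin k)} {c : ℝ} (h : inK v c x) : x ≠ 0 := by
  rintro rfl
  simp [inK] at h

lemma inK_sum {v : EuclideanSpace ℝ (Fin k)} {c : ℝ} (hc : 0 ≤ c)
    (p : Fin k → EuclideanSpace ℝ (Fin k)) (hp : ∀ i, inK v c (p i))
    (γ : Fin k → ℝ) (hγ : ∀ i, 0 ≤ γ i) (j : Fin k) (hj : 0 < γ j) :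
    inK v c (∑ i, γ i • p i) := by
  have h1 : c * ‖∑ i, γ i • p i‖ ≤ ∑ i, γ i * (c * ‖p i‖) := by
    calc c * ‖∑ i, γ i • p i‖ ≤ c * ∑ i, ‖γ i • p i‖ := by
          exact mul_le_mul_of_nonneg_left (norm_sum_le _ _) hc
      _ = ∑ i, γ i * (c * ‖p i‖) := by
          rw [Finset.mul_sum]; congr 1; funext i
          rw [norm_smul, Real.norm_eq_abs, abs_of_nonneg (hγ i)]; ring
  have h2 : ∑ i, γ i * (c * ‖p i‖) < ∑ i, γ i * ⟪v, p i⟫ := by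
    apply Finset.sum_lt_sum
    · intro i _
      rcases lt_or_eq_of_le (hγ i) with h | h
      · exact mul_le_mul_of_nonneg_left (hp i).le h.le
      · simp [← h]
    · exact ⟨j, Finset.mem_univ j, by
        exact mul_lt_mul_of_pos_left (hp j) hj⟩
  have h3 : ⟪v, ∑ i, γ i • p i⟫ = ∑ i, γ i * ⟪v, p i⟫ := by
    rw [inner_sum]; congr 1; funext i; rw [real_inner_smul_right]
  show c * ‖∑ i, γ i • p i‖ < ⟪v, ∑ i, γ i • p i⟫
  rw [h3]; exact lt_of_le_of_lt h1 h2

lemma inK.norm_pos {v x : EuclideanSpace ℝ (Fin k)} {c : ℝ} (h : inK v c x) : 0 < ‖x‖ :=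
  norm_pos_iff.mpr h.ne_zero

lemma inK.angle_lt {v x : EuclideanSpace ℝ (Fin k)} {c ε₀ : ℝ}
    (hε₀ : 0 < ε₀) (hε₀' : ε₀ ≤ π / 2) (hv0 : v ≠ 0)
    (hcε : ‖v‖ * Real.cos ε₀ < c) (h : inK v c x) : InnerProductGeometry.angle v x < ε₀ := by
  have hx : 0 < ‖x‖ := h.norm_pos
  have hv : 0 < ‖v‖ := norm_pos_iff.mpr hv0
  have hcos : Real.cos ε₀ < Real.cos (InnerProductGeometry.angle v x) := by
    rw [InnerProductGeometry.cos_angle]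
    rw [lt_div_iff₀ (by positivity)]
    calc Real.cos ε₀ * (‖v‖ * ‖x‖) = (‖v‖ * Real.cos ε₀) * ‖x‖ := by ring
      _ < c * ‖x‖ := by exact mul_lt_mul_of_pos_right hcε hx
      _ < ⟪v, x⟫ := h
  by_contra hcon
  push_neg at hcon
  have h2 : Real.cos (InnerProductGeometry.angle v x) ≤ Real.cos ε₀ :=
    (Real.strictAntiOn_cos.le_iff_ge
      ⟨InnerProductGeometry.angle_nonneg v x, InnerProductGeometry.angle_le_pi v x⟩
      ⟨hε₀.le, by linarith [Real.pi_pos]⟩).mpr hcon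
  linarith

lemma inK.pos_coord {v x : EuclideanSpace ℝ (Fin k)} {c : ℝ} (i0 : Fin k)
    (hv1 : 0 < v i0) (hc' : ‖v - (v i0) • EuclideanSpace.single i0 (1:ℝ)‖ < c)
    (h : inK v c x) : 0 < x i0 := by
  set v' : EuclideanSpace ℝ (Fin k) := v - (v i0) • EuclideanSpace.single i0 (1:ℝ) with hv'
  have hsplit : ⟪v, x⟫ = v i0 * x i0 + ⟪v', x⟫ := by
    have : v = (v i0) • EuclideanSpace.single i0 (1:ℝ) + v' := by rw [hv']; abel
    nth_rewrite 1 [this]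
    rw [inner_add_left, real_inner_smul_left, EuclideanSpace.inner_single_left]
    simp
  have hCS : ⟪v', x⟫ ≤ ‖v'‖ * ‖x‖ := real_inner_le_norm v' x
  have hx : 0 < ‖x‖ := h.norm_pos
  have h1 : 0 < v i0 * x i0 := by
    have := h
    rw [inK] at this
    nlinarith
  nlinarith

lemma exists_const (hk : 0 < k) (v : EuclideanSpace ℝ (Fin k)) (hv1 : 0 < v ⟨0, hk⟩)
    (ε : ℝ) (hε : 0 < ε) :
    ∃ c : ℝ, 0 ≤ c ∧ c < ‖v‖ ∧
      (∀ x, inK v c x → InnerProductGeometry.angle v x < ε) ∧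
      (∀ x, inK v c x → 0 < x ⟨0, hk⟩) := by
  set i0 : Fin k := ⟨0, hk⟩
  have hv0 : v ≠ 0 := by
    intro h; rw [h] at hv1; simp at hv1
  set ε₀ : ℝ := min ε (π / 2) with hε₀def
  have hε₀ : 0 < ε₀ := lt_min hε (by positivity)
  have hε₀' : ε₀ ≤ π / 2 := min_le_right _ _
  set v' : EuclideanSpace ℝ (Fin k) := v - (v i0) • EuclideanSpace.single i0 (1:ℝ) with hv'def
  have hv'i0 : v' i0 = 0 := by
    simp [hv'def, EuclideanSpace.single_apply]
  have horth : ⟪(v i0) • EuclideanSpace.single i0 (1:ℝ), v'⟫ = 0 := by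
    rw [real_inner_smul_left, real_inner_comm, EuclideanSpace.inner_single_right]
    simp [hv'i0]
  have hdecomp : v = (v i0) • EuclideanSpace.single i0 (1:ℝ) + v' := by
    rw [hv'def]; abel
  have hnorm : ‖v‖ ^ 2 = |v i0| ^ 2 + ‖v'‖ ^ 2 := by
    nth_rewrite 1 [hdecomp]
    rw [norm_add_sq_real, horth]
    rw [norm_smul, EuclideanSpace.norm_single]
    simp [Real.norm_eq_abs]
  have hv'lt : ‖v'‖ < ‖v‖ := by
    nlinarith [norm_nonneg v, norm_nonneg v', abs_pos.mpr hv1.ne']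
  have hcos1 : Real.cos ε₀ < 1 := by
    have := Real.strictAntiOn_cos (Set.mem_Icc.mpr ⟨le_refl 0, Real.pi_pos.le⟩)
      (Set.mem_Icc.mpr ⟨hε₀.le, by linarith [Real.pi_pos]⟩) hε₀
    rwa [Real.cos_zero] at this
  set M : ℝ := max (‖v‖ * Real.cos ε₀) ‖v'‖ with hMdef
  have hM : M < ‖v‖ := by
    apply max_lt _ hv'lt
    nlinarith [norm_pos_iff.mpr hv0]
  refine ⟨(M + ‖v‖) / 2, ?_, by linarith, ?_, ?_⟩
  · have : (0:ℝ) ≤ ‖v'‖ := norm_nonneg _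
    have h2 : ‖v'‖ ≤ M := le_max_right _ _
    linarith
  · intro x hx
    have h1 : ‖v‖ * Real.cos ε₀ < (M + ‖v‖) / 2 := by
      have := le_max_left (‖v‖ * Real.cos ε₀) ‖v'‖
      linarith
    exact lt_of_lt_of_le (hx.angle_lt hε₀ hε₀' hv0 h1) (min_le_left _ _)
  · intro x hx
    have h1 : ‖v - (v i0) • EuclideanSpace.single i0 (1:ℝ)‖ < (M + ‖v‖) / 2 := by
      have := le_max_right (‖v‖ * Real.cos ε₀) ‖v'‖
      rw [← hv'def]; linarith
    exact hx.pos_coord i0 hv1 h1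

/-- If `v` has ℚ-linearly independent coordinates and is a real linear combination of the rows
of a nonsingular rational matrix, then the coefficients admit no nontrivial rational relation. -/
lemma norel (v : EuclideanSpace ℝ (Fin k)) (hv : LinearIndependent ℚ (fun i : Fin k => v i))
    (p : Fin k → Fin k → ℤ)
    (hdet : (Matrix.of (fun i m => (p i m : ℚ)) : Matrix (Fin k) (Fin k) ℚ).det ≠ 0)
    (β : Fin k → ℝ) (hsum : ∀ m, v m = ∑ i, β i * (p i m : ℝ))
    (cq : Fin k → ℚ) (hrel : ∑ i, (cq i : ℝ) * β i = 0) : cq = 0 := by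
  set A : Matrix (Fin k) (Fin k) ℚ := Matrix.of (fun i m => (p i m : ℚ)) with hA
  have hU : IsUnit A.det := isUnit_iff_ne_zero.mpr hdet
  set d : Fin k → ℚ := A⁻¹.mulVec cq with hd
  have hAd : A.mulVec d = cq := by
    rw [hd, Matrix.mulVec_mulVec, Matrix.mul_nonsing_inv _ hU, Matrix.one_mulVec]
  have hAd' : ∀ i, ∑ m, (d m : ℝ) * (p i m : ℝ) = (cq i : ℝ) := by
    intro i
    have := congrFun hAd i
    rw [Matrix.mulVec, dotProduct] at this
    have := congrArg (fun q : ℚ => (q : ℝ)) this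
    push_cast at this
    simpa [hA, mul_comm] using this
  have hkey : ∑ m, (d m : ℝ) * v m = 0 := by
    calc ∑ m, (d m : ℝ) * v m = ∑ m, (d m : ℝ) * ∑ i, β i * (p i m : ℝ) := by
          congr 1; funext m; rw [hsum m]
      _ = ∑ m, ∑ i, β i * ((d m : ℝ) * (p i m : ℝ)) := by
          congr 1; funext m; rw [Finset.mul_sum]; congr 1; funext i; ring
      _ = ∑ i, β i * ∑ m, (d m : ℝ) * (p i m : ℝ) := by
          rw [Finset.sum_comm]; congr 1; funext i; rw [Finset.mul_sum]
      _ = ∑ i, β i * (cq i : ℝ) := by congr 1; funext i; rw [hAd' i]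
      _ = 0 := by rw [← hrel]; exact Finset.sum_congr rfl (fun i _ => mul_comm _ _)
  have hd0 : d = 0 := by
    have h := Fintype.linearIndependent_iff.mp hv d ?_
    · funext m; exact h m
    · simpa [Rat.smul_def] using hkey
  rw [← hAd, hd0, Matrix.mulVec_zero]

lemma norel_pair (v : EuclideanSpace ℝ (Fin k)) (hv : LinearIndependent ℚ (fun i : Fin k => v i))
    (p : Fin k → Fin k → ℤ)
    (hdet : (Matrix.of (fun i m => (p i m : ℚ)) : Matrix (Fin k) (Fin k) ℚ).det ≠ 0)
    (β : Fin k → ℝ) (hsum : ∀ m, v m = ∑ i, β i * (p i m : ℝ))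
    (i j : Fin k) (hij : i ≠ j) (a b : ℚ)
    (h : (a : ℝ) * β i = (b : ℝ) * β j) : a = 0 := by
  have h0 := norel v hv p hdet β hsum (Pi.single i a - Pi.single j b) ?_
  · have := congrFun h0 i
    simpa [Pi.single_apply, hij, (Ne.symm hij)] using this
  · have hsplit : ∀ m, ((Pi.single i a - Pi.single j b : Fin k → ℚ) m : ℝ) * β m
        = (if m = i then (a:ℝ) * β i else 0) - (if m = j then (b:ℝ) * β j else 0) := by
      intro m
      by_cases h1 : m = i
      · subst h1; simp [Pi.single_apply, hij]
      · by_cases h2 : m = j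
        · subst h2; simp [Pi.single_apply, h1, Ne.symm hij]
        · simp [Pi.single_apply, h1, h2]
    rw [Finset.sum_congr rfl (fun m _ => hsplit m), Finset.sum_sub_distrib]
    simp [Finset.sum_ite_eq', h]

def ofI (w : Fin k → ℤ) : EuclideanSpace ℝ (Fin k) := WithLp.toLp 2 (fun j => (w j : ℝ))

lemma norm_le_card_mul (x : EuclideanSpace ℝ (Fin k)) (D : ℝ) (hD : 0 ≤ D)
    (h : ∀ m, |x m| ≤ D) : ‖x‖ ≤ (k : ℝ) * D := by
  rw [EuclideanSpace.norm_eq]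
  simp only [Real.norm_eq_abs, sq_abs]
  have h1 : ∑ m, x m ^ 2 ≤ ((k:ℝ) * D) ^ 2 := by
    calc ∑ m, x m ^ 2 ≤ ∑ _m : Fin k, D ^ 2 := by
          apply Finset.sum_le_sum
          intro m _
          have h2 := h m
          have h3 := abs_nonneg (x m)
          nlinarith [sq_abs (x m)]
      _ = (k:ℝ) * D ^ 2 := by simp [Finset.sum_const, mul_comm]
      _ ≤ ((k:ℝ) * D) ^ 2 := by
          rcases Nat.eq_zero_or_pos k with h | h
          · simp [h]
          · have hk1 : (1:ℝ) ≤ (k:ℝ) := by exact_mod_cast h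
            nlinarith
  calc Real.sqrt (∑ m, x m ^ 2) ≤ Real.sqrt (((k:ℝ) * D) ^ 2) := Real.sqrt_le_sqrt h1
    _ = (k:ℝ) * D := Real.sqrt_sq (by positivity)

set_option maxHeartbeats 1000000 in
lemma base (hk : 0 < k) (v : EuclideanSpace ℝ (Fin k)) (hvne : ∀ i, v i ≠ 0)
    (c : ℝ) (hc0 : 0 ≤ c) (hcv : c < ‖v‖) :
    ∃ (p : Fin k → Fin k → ℤ) (β : Fin k → ℝ),
      (Matrix.of (fun i m => (p i m : ℚ)) : Matrix (Fin k) (Fin k) ℚ).det ≠ 0 ∧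
      (∀ i, 0 < β i) ∧ (∀ m, v m = ∑ i, β i * (p i m : ℝ)) ∧
      (∀ i, inK v c (ofI (p i))) := by
  classical
  have hnv : 0 < ‖v‖ := lt_of_le_of_lt hc0 hcv
  have hvpos : ∀ i, 0 < |v i| := fun i => abs_pos.mpr (hvne i)
  -- signs
  set s : Fin k → ℤ := fun i => if 0 < v i then 1 else -1 with hsdef
  have habs : ∀ i, (s i : ℝ) * v i = |v i| := by
    intro i
    by_cases h : 0 < v i
    · simp [hsdef, h, abs_of_pos h]
    · have hlt : v i < 0 := lt_of_le_of_ne (not_lt.mp h) (hvne i)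
      simp [hsdef, h, abs_of_neg hlt]
  have hs2 : ∀ i, (s i : ℝ) * (s i : ℝ) = 1 := by
    intro i; by_cases h : 0 < v i <;> simp [hsdef, h]
  have hsq2 : ∀ m, ((s m : ℚ)) * ((s m : ℚ)) = 1 := by
    intro m; by_cases h : 0 < v m <;> simp [hsdef, h]
  have hsabs : ∀ m, |(s m : ℝ)| = 1 := by
    intro m; by_cases h : 0 < v m <;> simp [hsdef, h]
  -- scale
  set D : ℝ := (k : ℝ) * ((k : ℝ) + 2) with hDdef
  have hD0 : 0 ≤ D := by positivity
  set Rb : ℝ := D * (c + ‖v‖) / (‖v‖ * (‖v‖ - c)) with hRbdef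
  have hRb0 : 0 ≤ Rb := div_nonneg (by positivity) (by nlinarith)
  set R : ℝ := Rb + 1 with hRdef
  have hR1 : 1 ≤ R := by linarith
  have hR0 : 0 < R := by linarith
  have hRmain : D * (c + ‖v‖) < R * (‖v‖ * (‖v‖ - c)) := by
    have hpos : 0 < ‖v‖ * (‖v‖ - c) := by nlinarith
    rw [hRdef, add_mul, hRbdef, div_mul_cancel₀ _ hpos.ne']
    nlinarith
  -- integer data
  set F : Fin k → ℤ := fun m => ⌊R * |v m|⌋ with hFdef
  set q : Fin k → ℤ := fun m => s m * F m with hqdef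
  set p : Fin k → Fin k → ℤ := fun i m => q m + (if m = i then ((k : ℤ) + 1) * s m else 0)
    with hpdef
  have hqapp : ∀ m, q m = s m * F m := fun m => rfl
  have hpapp : ∀ i m, p i m = q m + (if m = i then ((k : ℤ) + 1) * s m else 0) :=
    fun i m => rfl
  have hF0 : ∀ m, 0 ≤ F m := fun m => Int.floor_nonneg.mpr (by positivity)
  have hFle : ∀ m, (F m : ℝ) ≤ R * |v m| := fun m => Int.floor_le _
  have hFgt : ∀ m, R * |v m| - 1 < (F m : ℝ) := fun m => Int.sub_one_lt_floor _
  have hqm : ∀ m, ((q m : ℝ)) = (s m : ℝ) * (F m : ℝ) := by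
    intro m; rw [hqapp m]; push_cast; ring
  -- coordinates of p i are close to R v
  have hcoord : ∀ i m, |(p i m : ℝ) - R * v m| ≤ (k : ℝ) + 2 := by
    intro i m
    have hAv := hvpos m
    set A : ℝ := |v m| with hAdef
    have hRv : R * v m = (s m : ℝ) * (R * A) := by
      linear_combination R * (s m : ℝ) * habs m - R * v m * hs2 m
    have hFA : |(F m : ℝ) - R * A| ≤ 1 := by
      rw [abs_le]
      constructor
      · linarith [hFgt m]
      · linarith [hFle m]
    by_cases h : m = i
    · have h2 : (p i m : ℝ) = (s m : ℝ) * ((F m : ℝ) + ((k : ℝ) + 1)) := by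
        rw [hpapp i m, if_pos h, hqapp m]; push_cast; ring
      rw [h2, hRv]
      have h3 : (s m:ℝ) * ((F m:ℝ) + ((k:ℝ)+1)) - (s m:ℝ) * (R * A)
          = (s m:ℝ) * (((F m:ℝ) - R * A) + ((k:ℝ)+1)) := by ring
      rw [h3, abs_mul, hsabs m, one_mul]
      calc |((F m:ℝ) - R * A) + ((k:ℝ)+1)|
          ≤ |(F m:ℝ) - R * A| + |((k:ℝ)+1)| := abs_add_le _ _
        _ ≤ 1 + ((k:ℝ)+1) := by
            have : |((k:ℝ)+1)| = (k:ℝ)+1 := abs_of_nonneg (by positivity)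
            linarith
        _ = (k:ℝ) + 2 := by ring
    · have h2 : (p i m : ℝ) = (s m : ℝ) * (F m : ℝ) := by
        rw [hpapp i m, if_neg h, hqapp m]; push_cast; ring
      rw [h2, hRv]
      have h3 : (s m:ℝ) * (F m:ℝ) - (s m:ℝ) * (R * A)
          = (s m:ℝ) * ((F m:ℝ) - R * A) := by ring
      rw [h3, abs_mul, hsabs m, one_mul]
      linarith
  -- membership in the cone
  have hin : ∀ i, inK v c (ofI (p i)) := by
    intro i
    set x : EuclideanSpace ℝ (Fin k) := ofI (p i) with hx
    set e : EuclideanSpace ℝ (Fin k) := x - R • v with he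
    have hem : ∀ m, |e m| ≤ (k:ℝ) + 2 := by
      intro m
      have h1 : e m = (p i m : ℝ) - R * v m := rfl
      rw [h1]; exact hcoord i m
    have hne : ‖e‖ ≤ D := by
      have := norm_le_card_mul e ((k:ℝ)+2) (by positivity) hem
      rw [hDdef]; linarith
    have hxe : x = R • v + e := by rw [he]; abel
    have hinner : R * ‖v‖^2 - ‖v‖ * D ≤ ⟪v, x⟫ := by
      rw [hxe, inner_add_right, real_inner_smul_right, real_inner_self_eq_norm_sq]
      have h1 : |⟪v, e⟫| ≤ ‖v‖ * ‖e‖ := abs_real_inner_le_norm v e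
      have h3 : ‖v‖ * ‖e‖ ≤ ‖v‖ * D := mul_le_mul_of_nonneg_left hne (norm_nonneg v)
      have h4 := neg_abs_le ⟪v, e⟫
      linarith
    have hnx : ‖x‖ ≤ R * ‖v‖ + D := by
      rw [hxe]
      calc ‖R • v + e‖ ≤ ‖R • v‖ + ‖e‖ := norm_add_le _ _
        _ = R * ‖v‖ + ‖e‖ := by rw [norm_smul, Real.norm_eq_abs, abs_of_pos hR0]
        _ ≤ R * ‖v‖ + D := by linarith
    rw [inK]
    have hcx : c * ‖x‖ ≤ c * (R * ‖v‖ + D) := mul_le_mul_of_nonneg_left hnx hc0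
    have hlast : c * (R * ‖v‖ + D) < R * ‖v‖^2 - ‖v‖ * D := by nlinarith
    linarith
  -- the coefficients
  set V : ℝ := ∑ i, |v i| with hVdef
  have hV : 0 < V := Finset.sum_pos (fun i _ => hvpos i) ⟨⟨0, hk⟩, Finset.mem_univ _⟩
  set Qs : ℝ := ∑ m, (F m : ℝ) with hQsdef
  have hQs0 : 0 ≤ Qs := Finset.sum_nonneg fun m _ => by exact_mod_cast hF0 m
  set hh : ℝ := (k : ℝ) + 1 with hhdef
  have hh0 : 0 < hh := by positivity
  set σ : ℝ := V / (hh + Qs) with hσdef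
  have hσ : 0 < σ := div_pos hV (by linarith)
  have hσeq : σ * (hh + Qs) = V := by
    rw [hσdef]; field_simp
  have hσR : σ * R < 1 := by
    have hQsgt : V * R - (k:ℝ) < Qs := by
      have hsum := Finset.sum_lt_sum_of_nonempty (s := Finset.univ)
        ⟨⟨0, hk⟩, Finset.mem_univ _⟩ (f := fun m : Fin k => R * |v m| - 1)
        (g := fun m => (F m : ℝ)) (fun m _ => hFgt m)
      have heq : ∑ m : Fin k, (R * |v m| - 1) = V * R - (k:ℝ) := by
        rw [Finset.sum_sub_distrib, ← Finset.mul_sum]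
        simp [hVdef, mul_comm]
      rw [heq] at hsum
      exact hsum
    rw [hσdef, div_mul_eq_mul_div, div_lt_one (by linarith)]
    rw [hhdef]; linarith
  set β : Fin k → ℝ := fun i => (|v i| - σ * (F i : ℝ)) / hh with hβdef
  have hβapp : ∀ i, β i = (|v i| - σ * (F i : ℝ)) / hh := fun i => rfl
  have hβ : ∀ i, 0 < β i := by
    intro i
    rw [hβapp]
    apply div_pos _ hh0
    have h1 : σ * (F i : ℝ) ≤ σ * (R * |v i|) := mul_le_mul_of_nonneg_left (hFle i) hσ.le
    nlinarith [hvpos i]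
  have hsumbeta : ∑ i, β i = σ := by
    have heq : ∑ i, β i = (V - σ * Qs) / hh := by
      rw [← Finset.sum_div]
      congr 1
      rw [Finset.sum_sub_distrib, ← Finset.mul_sum, hVdef, hQsdef]
    rw [heq]
    rw [div_eq_iff hh0.ne']
    linarith [hσeq]
  have hsum : ∀ m, v m = ∑ i, β i * (p i m : ℝ) := by
    intro m
    have hstep : ∑ i, β i * (p i m : ℝ)
        = (∑ i, β i) * (q m : ℝ) + β m * (((k:ℝ) + 1) * (s m : ℝ)) := by
      have hterm : ∀ i, β i * (p i m : ℝ)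
          = β i * (q m : ℝ) + (if m = i then β i * (((k:ℝ)+1) * (s m : ℝ)) else 0) := by
        intro i
        by_cases h : m = i
        · rw [if_pos h, hpapp i m, if_pos h]; push_cast; ring
        · rw [if_neg h, hpapp i m, if_neg h]; push_cast; ring
      rw [Finset.sum_congr rfl (fun i _ => hterm i), Finset.sum_add_distrib,
        ← Finset.sum_mul, Finset.sum_ite_eq]
      simp
    rw [hstep, hsumbeta, hqm m, hβapp m]
    have hcancel : ((|v m| - σ * (F m:ℝ)) / hh) * (((k:ℝ)+1) * (s m:ℝ))
        = (|v m| - σ * (F m:ℝ)) * (s m:ℝ) := by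
      rw [hhdef]; field_simp
    rw [hcancel]
    linear_combination ((s m:ℝ)) * habs m - (v m) * hs2 m
  -- nonzero determinant
  have hdet : (Matrix.of (fun i m => (p i m : ℚ)) : Matrix (Fin k) (Fin k) ℚ).det ≠ 0 := by
    intro hdet0
    obtain ⟨t, ht0, htA⟩ := Matrix.exists_vecMul_eq_zero_iff.mpr hdet0
    set T : ℚ := ∑ i, t i with hT
    have hEm : ∀ m, T * ((q m : ℚ)) + t m * (((k:ℚ)+1) * ((s m : ℚ))) = 0 := by
      intro m
      have h0 := congrFun htA m
      simp only [Pi.zero_apply] at h0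
      rw [Matrix.vecMul, dotProduct] at h0
      have hterm : ∀ i, t i * ((Matrix.of (fun i m => (p i m : ℚ)) : Matrix (Fin k) (Fin k) ℚ) i m)
          = t i * ((q m : ℚ)) + (if m = i then t i * (((k:ℚ)+1) * ((s m : ℚ))) else 0) := by
        intro i
        rw [Matrix.of_apply]
        by_cases h : m = i
        · rw [if_pos h, hpapp i m, if_pos h]; push_cast; ring
        · rw [if_neg h, hpapp i m, if_neg h]; push_cast; ring
      rw [Finset.sum_congr rfl (fun i _ => hterm i), Finset.sum_add_distrib,
        ← Finset.sum_mul, Finset.sum_ite_eq] at h0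
      simpa [hT] using h0
    have htm : ∀ m, t m * ((k:ℚ)+1) = - T * ((F m : ℚ)) := by
      intro m
      have h0 := hEm m
      have hq : (q m : ℚ) = ((s m:ℚ)) * ((F m : ℚ)) := by rw [hqapp m]; push_cast; ring
      rw [hq] at h0
      linear_combination ((s m:ℚ)) * h0 - (t m * ((k:ℚ)+1) + T * ((F m:ℚ))) * hsq2 m
    have hTz : T = 0 := by
      have hQq0 : (0:ℚ) ≤ ∑ m, ((F m : ℚ)) := Finset.sum_nonneg fun m _ => by exact_mod_cast hF0 m
      have hsumT : T * ((k:ℚ)+1) = - T * (∑ m, ((F m : ℚ))) := by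
        rw [hT, Finset.sum_mul, Finset.sum_congr rfl (fun m _ => htm m), ← Finset.mul_sum]
      have h5 : T * (((k:ℚ)+1) + (∑ m, ((F m : ℚ)))) = 0 := by linear_combination hsumT
      have h6 : (((k:ℚ)+1) + (∑ m, ((F m : ℚ)))) ≠ 0 := by positivity
      exact (mul_eq_zero.mp h5).resolve_right h6
    have : t = 0 := by
      funext m
      have h7 : t m * ((k:ℚ)+1) = 0 := by rw [htm m, hTz]; ring
      have h8 : ((k:ℚ)+1) ≠ 0 := by positivity
      exact (mul_eq_zero.mp h7).resolve_right h8
    exact ht0 this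
  exact ⟨p, β, hdet, hβ, hsum, hin⟩

lemma detcast (p : Fin k → Fin k → ℤ) :
    (Matrix.of (fun i m => (p i m : ℚ)) : Matrix (Fin k) (Fin k) ℚ).det
      = (((Matrix.of (fun i m => p i m) : Matrix (Fin k) (Fin k) ℤ)).det : ℚ) := by
  have := RingHom.map_det (Int.castRingHom ℚ) (Matrix.of (fun i m => p i m))
  rw [show ((((Matrix.of (fun i m => p i m) : Matrix (Fin k) (Fin k) ℤ)).det : ℚ))
    = (Int.castRingHom ℚ) ((Matrix.of (fun i m => p i m) : Matrix (Fin k) (Fin k) ℤ)).det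
    from rfl, this]
  rfl

lemma endgame (p : Fin k → Fin k → ℤ)
    (h1 : ((Matrix.of (fun i m => p i m) : Matrix (Fin k) (Fin k) ℤ)).det.natAbs = 1) :
    ∃ b : Module.Basis (Fin k) ℤ (Fin k → ℤ), ∀ i, (b i : Fin k → ℤ) = p i := by
  classical
  set M : Matrix (Fin k) (Fin k) ℤ := (Matrix.of (fun i m => p i m)).transpose with hM
  have hdetM : IsUnit M.det := by
    rw [hM, Matrix.det_transpose, Int.isUnit_iff]
    rcases Int.natAbs_eq_iff.mp h1 with h | h
    · left; exact_mod_cast h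
    · right; exact_mod_cast h
  have hinv : Invertible M := M.invertibleOfIsUnitDet hdetM
  refine ⟨(Pi.basisFun ℤ (Fin k)).map (M.toLinearEquiv' hinv), fun i => ?_⟩
  funext m
  have h2 : ((Pi.basisFun ℤ (Fin k)).map (M.toLinearEquiv' hinv)) i
      = M.mulVec (Pi.single i 1) := by
    rw [Module.Basis.map_apply]
    have : (Pi.basisFun ℤ (Fin k)) i = Pi.single i 1 := by
      simp [Pi.basisFun_apply]
    rw [this]
    rfl
  rw [h2]
  rw [Matrix.mulVec_single]
  simp [hM]

lemma span_all (p : Fin k → Fin k → ℤ)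
    (h : ∀ y : Fin k → ℤ, ∃ cc : Fin k → ℤ, ∀ m, y m = ∑ i, cc i * p i m) :
    ((Matrix.of (fun i m => p i m) : Matrix (Fin k) (Fin k) ℤ)).det.natAbs = 1 := by
  classical
  set M : Matrix (Fin k) (Fin k) ℤ := Matrix.of (fun i m => p i m) with hM
  choose cc hcc using h
  set N : Matrix (Fin k) (Fin k) ℤ := Matrix.of (fun j i => cc (Pi.single j 1) i) with hN
  have hNM : N * M = 1 := by
    ext j m
    rw [Matrix.mul_apply, Matrix.one_apply]
    have h2 := (hcc (Pi.single j 1) m).symm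
    calc ∑ i, N j i * M i m = (Pi.single j (1:ℤ) : Fin k → ℤ) m := by
          rw [← h2]; rfl
      _ = if j = m then 1 else 0 := by
          rw [Pi.single_apply]
          by_cases h : j = m <;> simp [h, eq_comm]
  have hdet : N.det * M.det = 1 := by rw [← Matrix.det_mul, hNM, Matrix.det_one]
  have := congrArg Int.natAbs hdet
  rw [Int.natAbs_mul] at this
  have h3 : M.det.natAbs ∣ 1 := Dvd.intro_left _ this
  exact Nat.eq_one_of_dvd_one h3

set_option maxHeartbeats 1000000 in
lemma descend (v : EuclideanSpace ℝ (Fin k))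
    (hv : LinearIndependent ℚ (fun i : Fin k => v i)) (c : ℝ) (hc0 : 0 ≤ c) :
    ∀ n : ℕ, ∀ p : Fin k → Fin k → ℤ, ∀ β : Fin k → ℝ,
      ((Matrix.of (fun i m => p i m) : Matrix (Fin k) (Fin k) ℤ)).det.natAbs = n →
      ((Matrix.of (fun i m => p i m) : Matrix (Fin k) (Fin k) ℤ)).det ≠ 0 →
      (∀ i, 0 < β i) → (∀ m, v m = ∑ i, β i * (p i m : ℝ)) →
      (∀ i, inK v c (ofI (p i))) →
      ∃ (u : Fin k → Fin k → ℤ) (α : Fin k → ℝ),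
        (∃ b : Module.Basis (Fin k) ℤ (Fin k → ℤ), ∀ i, (b i : Fin k → ℤ) = u i) ∧
        (∀ i, 0 < α i) ∧ (∀ m, v m = ∑ i, α i * (u i m : ℝ)) ∧
        (∀ i, inK v c (ofI (u i))) := by
  classical
  intro n
  induction n using Nat.strong_induction_on with
  | _ n IH =>
    intro p β hn hdz hβ hsum hin
    by_cases h1 : ((Matrix.of (fun i m => p i m) : Matrix (Fin k) (Fin k) ℤ)).det.natAbs = 1
    · exact ⟨p, β, endgame p h1, hβ, hsum, hin⟩
    -- there is an integer vector outside the span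
    have hy : ∃ y : Fin k → ℤ, ∀ cc : Fin k → ℤ, ¬ (∀ m, y m = ∑ i, cc i * p i m) := by
      by_contra hcon
      push_neg at hcon
      exact h1 (span_all p hcon)
    obtain ⟨y, hyprop⟩ := hy
    -- rational coordinates of y in the (row) basis p
    set A : Matrix (Fin k) (Fin k) ℚ := Matrix.of (fun i m => (p i m : ℚ)) with hA
    have hdetq : A.det ≠ 0 := by
      rw [hA, detcast]
      exact_mod_cast hdz
    have hU : IsUnit A.det := isUnit_iff_ne_zero.mpr hdetq
    set ct : Fin k → ℚ := Matrix.vecMul (fun i => (y i : ℚ)) A⁻¹ with hct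
    have hctA : Matrix.vecMul ct A = fun i => (y i : ℚ) := by
      rw [hct, Matrix.vecMul_vecMul, Matrix.nonsing_inv_mul _ hU, Matrix.vecMul_one]
    have hycoord : ∀ m, (y m : ℚ) = ∑ i, ct i * (p i m : ℚ) := by
      intro m
      have h0 := congrFun hctA m
      rw [Matrix.vecMul, dotProduct] at h0
      rw [← h0]
      rfl
    -- fractional parts
    set γ : Fin k → ℚ := fun i => Int.fract (ct i) with hγ
    have hγ0 : ∀ i, 0 ≤ γ i := fun i => Int.fract_nonneg _
    have hγ1 : ∀ i, γ i < 1 := fun i => Int.fract_lt_one _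
    -- the new integer vector x
    set x : Fin k → ℤ := fun m => y m - ∑ i, ⌊ct i⌋ * p i m with hx
    have hxq : ∀ m, ((x m : ℚ)) = ∑ i, γ i * (p i m : ℚ) := by
      intro m
      rw [hx]
      push_cast
      rw [hycoord m, ← Finset.sum_sub_distrib]
      congr 1; funext i
      have hfr : Int.fract (ct i) = ct i - ⌊ct i⌋ := (Int.self_sub_floor (ct i)).symm
      simp only [hγ]
      rw [hfr]
      ring
    -- some fractional part is nonzero
    have hJne : ∃ i, γ i ≠ 0 := by
      by_contra hcon
      push_neg at hcon
      apply hyprop (fun i => ⌊ct i⌋)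
      intro m
      have h2 : ((y m : ℚ)) = ((∑ i, ⌊ct i⌋ * p i m : ℤ) : ℚ) := by
        push_cast
        rw [hycoord m]
        congr 1; funext i
        have h3 : Int.fract (ct i) = 0 := by
          have := hcon i
          simpa [hγ] using this
        have h5 : ct i - ⌊ct i⌋ = 0 := by
          rw [Int.self_sub_floor]; exact h3
        have h4 : (⌊ct i⌋ : ℚ) = ct i := by linarith
        rw [h4]
      exact_mod_cast h2
    set J : Finset (Fin k) := Finset.univ.filter (fun i => γ i ≠ 0) with hJ
    have hJne' : J.Nonempty := by
      obtain ⟨i, hi⟩ := hJne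
      exact ⟨i, by simp [hJ, hi]⟩
    obtain ⟨j, hjJ, hjmax⟩ := J.exists_max_image (fun i => (γ i : ℝ) / β i) hJne'
    have hγj : 0 < γ j := by
      have : γ j ≠ 0 := by
        have := hjJ
        rw [hJ, Finset.mem_filter] at this
        exact this.2
      exact lt_of_le_of_ne (hγ0 j) (Ne.symm this)
    have hγjR : 0 < ((γ j : ℝ)) := by exact_mod_cast hγj
    -- strict maximality
    have hstrict : ∀ i, i ≠ j → (γ i : ℝ) * β j < (γ j : ℝ) * β i := by
      intro i hij
      by_cases hiJ : i ∈ J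
      · have hle : (γ i : ℝ) / β i ≤ (γ j : ℝ) / β j := hjmax i hiJ
        have hne : (γ i : ℝ) / β i ≠ (γ j : ℝ) / β j := by
          intro heq
          have hcross : ((γ i : ℚ) : ℝ) * β j = ((γ j : ℚ) : ℝ) * β i := by
            rw [div_eq_div_iff (hβ i).ne' (hβ j).ne'] at heq
            exact heq
          have := norel_pair v hv p hdetq β hsum j i (Ne.symm hij) (γ i) (γ j) hcross
          rw [hJ, Finset.mem_filter] at hiJ
          exact hiJ.2 this
        have hlt := lt_of_le_of_ne hle hne
        rw [div_lt_div_iff₀ (hβ i) (hβ j)] at hlt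
        linarith
      · have : γ i = 0 := by
          rw [hJ, Finset.mem_filter] at hiJ
          push_neg at hiJ
          exact hiJ (Finset.mem_univ i)
        rw [this]
        push_cast
        rw [zero_mul]
        exact mul_pos hγjR (hβ i)
    -- the new data
    set p' : Fin k → Fin k → ℤ := Function.update p j x with hp'
    set β' : Fin k → ℝ := fun i => if i = j then β j / (γ j : ℝ)
      else β i - β j * (γ i : ℝ) / (γ j : ℝ) with hβ'
    have hβ'j : β' j = β j / (γ j : ℝ) := by simp [hβ']
    have hβ'i : ∀ i, i ≠ j → β' i = β i - β j * (γ i : ℝ) / (γ j : ℝ) := by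
      intro i hij; simp [hβ', hij]
    have hβ'pos : ∀ i, 0 < β' i := by
      intro i
      by_cases hij : i = j
      · rw [hij, hβ'j]; exact div_pos (hβ j) hγjR
      · rw [hβ'i i hij]
        have := hstrict i hij
        rw [sub_pos, div_lt_iff₀ hγjR]
        nlinarith
    -- real-coefficient expression of x
    have hxR : ∀ m, ((x m : ℝ)) = ∑ i, ((γ i : ℝ)) * ((p i m : ℝ)) := by
      intro m
      have h0 := hxq m
      have h2 := congrArg (fun q : ℚ => (q : ℝ)) h0
      push_cast at h2
      exact h2
    -- new sum expression
    have hsum' : ∀ m, v m = ∑ i, β' i * (p' i m : ℝ) := by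
      intro m
      have hLHS : ∑ i, β' i * (p' i m : ℝ)
          = β' j * (x m : ℝ) + ∑ i ∈ Finset.univ.erase j, β' i * (p i m : ℝ) := by
        rw [← Finset.add_sum_erase _ (fun i => β' i * (p' i m : ℝ)) (Finset.mem_univ j)]
        congr 1
        · rw [hp']; rw [Function.update_self]
        · apply Finset.sum_congr rfl
          intro i hi
          rw [hp', Function.update_of_ne (Finset.ne_of_mem_erase hi)]
      rw [hLHS, hxR m, hβ'j, Finset.mul_sum]
      rw [← Finset.add_sum_erase _
        (fun i => β j / (γ j:ℝ) * ((γ i:ℝ) * (p i m : ℝ))) (Finset.mem_univ j)]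
      have hjterm : β j / (γ j:ℝ) * ((γ j:ℝ) * (p j m : ℝ)) = β j * (p j m : ℝ) := by
        field_simp
      rw [hjterm, add_assoc, ← Finset.sum_add_distrib]
      have hiterm : ∀ i ∈ Finset.univ.erase j,
          β j / (γ j:ℝ) * ((γ i:ℝ) * (p i m : ℝ)) + β' i * (p i m : ℝ)
            = β i * (p i m : ℝ) := by
        intro i hi
        rw [hβ'i i (Finset.ne_of_mem_erase hi)]
        field_simp
        ring
      rw [Finset.sum_congr rfl hiterm]
      rw [Finset.add_sum_erase _ (fun i => β i * (p i m : ℝ)) (Finset.mem_univ j)]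
      exact hsum m
    -- membership of the new vector
    have hxin : inK v c (ofI x) := by
      have hofI : ofI x = ∑ i, ((γ i : ℝ)) • ofI (p i) := by
        ext m
        simp [ofI, hxR m]
      rw [hofI]
      have hγ0R : ∀ i, (0:ℝ) ≤ ((γ i : ℝ)) := fun i => by exact_mod_cast hγ0 i
      exact inK_sum hc0 (fun i => ofI (p i)) hin (fun i => ((γ i : ℝ))) hγ0R j hγjR
    have hin' : ∀ i, inK v c (ofI (p' i)) := by
      intro i
      by_cases hij : i = j
      · rw [hij, hp', Function.update_self]; exact hxin
      · rw [hp', Function.update_of_ne hij]; exact hin i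
    -- determinant of the new matrix
    set A' : Matrix (Fin k) (Fin k) ℚ := Matrix.of (fun i m => (p' i m : ℚ)) with hA'
    have hA'eq : A' = A.updateRow j (∑ i, γ i • A i) := by
      ext i m
      by_cases hij : i = j
      · subst hij
        rw [hA', Matrix.of_apply, hp', Function.update_self, Matrix.updateRow_self]
        rw [hxq m]
        rw [Finset.sum_apply]
        rfl
      · rw [hA', Matrix.of_apply, hp', Function.update_of_ne hij,
          Matrix.updateRow_ne hij]
        rfl
    have hdetA' : A'.det = γ j * A.det := by
      rw [hA'eq, Matrix.det_updateRow_sum]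
      rfl
    have hdz' : ((Matrix.of (fun i m => p' i m) : Matrix (Fin k) (Fin k) ℤ)).det ≠ 0 := by
      have h2 : ((((Matrix.of (fun i m => p' i m) : Matrix (Fin k) (Fin k) ℤ)).det : ℚ)) ≠ 0 := by
        rw [← detcast, ← hA', hdetA']
        exact mul_ne_zero (by exact_mod_cast hγj.ne') hdetq
      exact_mod_cast h2
    have hlt : ((Matrix.of (fun i m => p' i m) : Matrix (Fin k) (Fin k) ℤ)).det.natAbs < n := by
      have hq : ((((Matrix.of (fun i m => p' i m) : Matrix (Fin k) (Fin k) ℤ)).det : ℚ))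
          = γ j * ((((Matrix.of (fun i m => p i m) : Matrix (Fin k) (Fin k) ℤ)).det : ℚ)) := by
        rw [← detcast, ← detcast, ← hA', ← hA, hdetA']
      have habs : |((((Matrix.of (fun i m => p' i m) : Matrix (Fin k) (Fin k) ℤ)).det : ℚ))|
          < |((((Matrix.of (fun i m => p i m) : Matrix (Fin k) (Fin k) ℤ)).det : ℚ))| := by
        rw [hq, abs_mul, abs_of_pos (by exact_mod_cast hγj : (0:ℚ) < γ j)]
        have hAne : (0:ℚ) < |((((Matrix.of (fun i m => p i m) : Matrix (Fin k) (Fin k) ℤ)).det : ℚ))| := by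
          rw [abs_pos]
          exact_mod_cast hdz
        nlinarith [hγ1 j]
      rw [← hn]
      have hcast : ∀ z : ℤ, ((z.natAbs : ℚ)) = |((z : ℚ))| := by
        intro z
        rw [Nat.cast_natAbs, Int.cast_abs]
      have := habs
      rw [← hcast, ← hcast] at this
      exact_mod_cast this
    exact IH _ hlt p' β' rfl hdz' hβ'pos hsum' hin'

end Stmt1Aux

open Stmt1Aux in
/-- A maximally irrational vector `v ∈ ℝ^k` with positive first coordinate
can be approximated, in angular distance, by the members of a ℤ-basis `u` of `ℤ^k`
in whose positive cone `v` lies, with all `u i` having positive first coordinate. -/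
theorem stmt1 (k : ℕ) (hk : 0 < k) (v : EuclideanSpace ℝ (Fin k))
    (hv : LinearIndependent ℚ (fun i : Fin k => v i))
    (hv1 : 0 < v ⟨0, hk⟩) (ε : ℝ) (hε : 0 < ε) :
    ∃ u : Fin k → Fin k → ℤ,
      -- (1) u is a ℤ-basis of ℤ^k
      (∃ b : Module.Basis (Fin k) ℤ (Fin k → ℤ), ∀ i, b i = u i) ∧
      -- (2) v is a strictly positive combination of the u i
      (∃ α : Fin k → ℝ, (∀ i, 0 < α i) ∧
        v = ∑ i, α i • (WithLp.toLp 2 (fun j => ((u i j : ℝ))) : EuclideanSpace ℝ (Fin k))) ∧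
      -- (3) each ray l(u i) is within angular distance ε of l(v)
      (∀ i, InnerProductGeometry.angle v
        (WithLp.toLp 2 (fun j => ((u i j : ℝ))) : EuclideanSpace ℝ (Fin k)) < ε) ∧
      -- (4) the first coordinate of each u i is positive
      (∀ i, 0 < u i ⟨0, hk⟩) := by
  have hvne : ∀ i, v i ≠ 0 := fun i => hv.ne_zero i
  obtain ⟨c, hc0, hcv, hangle, hpos⟩ := exists_const hk v hv1 ε hε
  obtain ⟨p, β, hdetq, hβ, hsum, hin⟩ := base hk v hvne c hc0 hcv
  have hdz : ((Matrix.of (fun i m => p i m) : Matrix (Fin k) (Fin k) ℤ)).det ≠ 0 := by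
    rw [detcast] at hdetq
    exact_mod_cast hdetq
  obtain ⟨u, α, hb, hα, hsum', hin'⟩ := descend v hv c hc0 _ p β rfl hdz hβ hsum hin
  refine ⟨u, hb, ⟨α, hα, ?_⟩, fun i => ?_, fun i => ?_⟩
  · ext m
    rw [WithLp.ofLp_sum, Finset.sum_apply]
    have h2 : ∀ i, (α i • (WithLp.toLp 2 (fun j => ((u i j : ℝ))) : EuclideanSpace ℝ (Fin k))) m
        = α i * ((u i m : ℝ)) := fun i => rfl
    rw [Finset.sum_congr rfl (fun i _ => h2 i)]
    exact hsum' m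
  · exact hangle (ofI (u i)) (hin' i)
  · have h3 : (0:ℝ) < ((u i ⟨0, hk⟩ : ℝ)) := hpos (ofI (u i)) (hin' i)
    exact_mod_cast h3
end

section
/- Let v ∈ R^k have Q-linearly independent coordinates, and let (a_1, ..., a_k) be a family of vectors in Z^k such that v = β_1 a_1 + ... + β_k a_k with all β_i > 0. Then (a_1, ..., a_k) is linearly independent over R, hence a basis of R^k. -/
/-- If `v ∈ ℝ^k` has ℚ-linearly independent coordinates and is a strictly
positive combination of integer vectors `a 1, ..., a k`, then the `a i` are linearly
independent over ℝ, hence form a basis of `ℝ^k`. -/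
theorem stmt2 (k : ℕ) (v : Fin k → ℝ) (hv : LinearIndependent ℚ v)
    (a : Fin k → Fin k → ℤ) (β : Fin k → ℝ) (hβ : ∀ i, 0 < β i)
    (hsum : v = ∑ i, β i • (fun j => (a i j : ℝ))) :
    LinearIndependent ℝ (fun i : Fin k => (fun j => (a i j : ℝ))) ∧
    Submodule.span ℝ (Set.range (fun i : Fin k => (fun j => (a i j : ℝ)))) = ⊤ := by
  set A : Matrix (Fin k) (Fin k) ℚ := fun i j => (a i j : ℚ) with hA
  -- First show det A ≠ 0 over ℚ
  have hdet : A.det ≠ 0 := by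
    intro h0
    obtain ⟨q, hq, hAq⟩ := (Matrix.exists_mulVec_eq_zero_iff).2 h0
    -- q is a nonzero rational vector with ∑ j, a i j * q j = 0 for all i
    have hqzero : ∀ j, q j = 0 := by
      apply Fintype.linearIndependent_iff.mp hv q
      have hvj : ∀ j, v j = ∑ i, β i * (a i j : ℝ) := by
        intro j
        rw [hsum]
        simp [Finset.sum_apply]
      calc ∑ j, q j • v j = ∑ j, ∑ i, β i * ((q j : ℝ) * (a i j : ℝ)) := by
            refine Finset.sum_congr rfl fun j _ => ?_
            rw [hvj j, Rat.smul_def, Finset.mul_sum]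
            refine Finset.sum_congr rfl fun i _ => by ring
        _ = ∑ i, β i * ∑ j, (q j : ℝ) * (a i j : ℝ) := by
            rw [Finset.sum_comm]
            simp [Finset.mul_sum]
        _ = 0 := by
            refine Finset.sum_eq_zero fun i _ => ?_
            have : (A.mulVec q) i = 0 := by rw [hAq]; rfl
            have h2 : ∑ j, (a i j : ℚ) * q j = 0 := this
            have h3 : ((∑ j, (a i j : ℚ) * q j : ℚ) : ℝ) = 0 := by rw [h2]; norm_num
            push_cast at h3
            have : ∑ j, (q j : ℝ) * (a i j : ℝ) = 0 := by
              rw [← h3]; exact Finset.sum_congr rfl fun j _ => by ring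
            rw [this, mul_zero]
    exact hq (funext hqzero)
  -- Real matrix
  set B : Matrix (Fin k) (Fin k) ℝ := fun i j => (a i j : ℝ) with hB
  have hBdet : B.det ≠ 0 := by
    have : B = A.map (algebraMap ℚ ℝ) := by
      ext i j; rw [Matrix.map_apply]; simp [hA, hB]
    rw [this, ← RingHom.mapMatrix_apply, ← RingHom.map_det]
    simpa using hdet
  have hli : LinearIndependent ℝ (fun i : Fin k => (fun j => (a i j : ℝ))) :=
    Matrix.linearIndependent_rows_iff_isUnit.mpr
      ((Matrix.isUnit_iff_isUnit_det B).mpr (isUnit_iff_ne_zero.mpr hBdet))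
  refine ⟨hli, ?_⟩
  apply hli.span_eq_top_of_card_eq_finrank'
  simp
end

section
/- Let (a_1, ..., a_k) be a basis of R^k and q = β_1 a_1 + ... + β_r a_r with all β_i > 0 for i ≤ r. Then the cone generated by (a_1, ..., a_k) equals the union over j = 1, ..., r of the cones generated by the families F_j obtained by replacing a_j with q. -/
/-- Key computation: a combination of the updated family equals a
combination of the original family with explicit coefficients. -/
lemma key_sum (k r : ℕ) (a : Fin k → Fin k → ℝ) (β : Fin k → ℝ) (q : Fin k → ℝ)
    (hq : q = ∑ i ∈ Finset.univ.filter (fun i : Fin k => (i : ℕ) < r), β i • a i)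
    (j : Fin k) (e : Fin k → ℝ) :
    ∑ i : Fin k, e i • Function.update a j q i =
      ∑ i : Fin k,
        ((if (i : ℕ) < r then e j * β i else 0) + (if i = j then 0 else e i)) • a i := by
  have h1 : ∑ i : Fin k, e i • Function.update a j q i
      = ∑ i : Fin k, (if i = j then e j • q else e i • a i) := by
    refine Finset.sum_congr rfl fun i _ => ?_
    by_cases h : i = j
    · subst h; simp [Function.update]
    · simp [Function.update, h]
  have h2 : ∑ i : Fin k, (if (i : ℕ) < r then e j * β i else 0) • a i = e j • q := by
    rw [hq, Finset.smul_sum,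
      ← Finset.sum_filter_add_sum_filter_not Finset.univ (fun i : Fin k => (i : ℕ) < r)
        (fun i => (if (i : ℕ) < r then e j * β i else 0) • a i)]
    have hz : ∑ i ∈ Finset.univ.filter (fun i : Fin k => ¬ (i : ℕ) < r),
        (if (i : ℕ) < r then e j * β i else 0) • a i = 0 := by
      refine Finset.sum_eq_zero fun i hi => ?_
      rw [Finset.mem_filter] at hi
      simp [hi.2]
    rw [hz, add_zero]
    refine Finset.sum_congr rfl fun i hi => ?_
    rw [Finset.mem_filter] at hi
    rw [if_pos hi.2, mul_smul]
  have h3 : ∑ i : Fin k, (if i = j then e j • q else e i • a i)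
      = ∑ i : Fin k, (if i = j then (0:ℝ) else e i) • a i + e j • q := by
    have hsplit : ∀ i : Fin k, (if i = j then e j • q else e i • a i)
        = (if i = j then (0:ℝ) else e i) • a i + (if i = j then e j • q else 0) := by
      intro i; by_cases h : i = j <;> simp [h]
    rw [Finset.sum_congr rfl fun i _ => hsplit i, Finset.sum_add_distrib,
      Finset.sum_ite_eq' Finset.univ j (fun _ => e j • q)]
    simp
  have h5 : ∑ i : Fin k,
      ((if (i : ℕ) < r then e j * β i else 0) + (if i = j then 0 else e i)) • a i
      = ∑ i : Fin k, (if (i : ℕ) < r then e j * β i else 0) • a i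
        + ∑ i : Fin k, (if i = j then (0:ℝ) else e i) • a i := by
    rw [← Finset.sum_add_distrib]
    exact Finset.sum_congr rfl fun i _ => add_smul _ _ _
  rw [h1, h3, h5, h2]
  abel

/-- If `(a 1, ..., a k)` is a basis of `ℝ^k` and
`q = β_1 a_1 + ... + β_r a_r` with all `β_i > 0` (`i < r`), then the cone generated by
`a` is the union over `j < r` of the cones generated by the families obtained from `a`
by replacing `a j` with `q`. -/
theorem stmt4 (k r : ℕ) (hr : 1 ≤ r) (hrk : r ≤ k)
    (a : Fin k → Fin k → ℝ) (ha : LinearIndependent ℝ a)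
    (hspan : Submodule.span ℝ (Set.range a) = ⊤)
    (β : Fin k → ℝ) (hβ : ∀ i : Fin k, (i : ℕ) < r → 0 < β i)
    (q : Fin k → ℝ)
    (hq : q = ∑ i ∈ Finset.univ.filter (fun i : Fin k => (i : ℕ) < r), β i • a i) :
    {x : Fin k → ℝ | ∃ c : Fin k → ℝ, (∀ i, 0 ≤ c i) ∧ x = ∑ i, c i • a i} =
      ⋃ (j : Fin k) (_ : (j : ℕ) < r),
        {x : Fin k → ℝ | ∃ c : Fin k → ℝ, (∀ i, 0 ≤ c i) ∧
          x = ∑ i, c i • Function.update a j q i} := by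
  ext x
  simp only [Set.mem_setOf_eq, Set.mem_iUnion]
  constructor
  · rintro ⟨c, hc, rfl⟩
    have hne : (Finset.univ.filter (fun i : Fin k => (i : ℕ) < r)).Nonempty := by
      refine ⟨⟨0, lt_of_lt_of_le hr hrk⟩, ?_⟩
      simp only [Finset.mem_filter, Finset.mem_univ, true_and]
      exact hr
    obtain ⟨j, hjmem, hjmin⟩ := Finset.exists_min_image _ (fun i => c i / β i) hne
    rw [Finset.mem_filter] at hjmem
    have hjr : (j : ℕ) < r := hjmem.2
    set t := c j / β j with ht
    have hβj := hβ j hjr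
    have ht0 : 0 ≤ t := div_nonneg (hc j) hβj.le
    refine ⟨j, hjr, fun i => if (i : ℕ) < r then (if i = j then t else c i - t * β i) else c i,
      ?_, ?_⟩
    · intro i
      by_cases hij : i = j
      · subst hij
        simpa [hjr] using ht0
      · by_cases hir : (i : ℕ) < r
        · simp only [if_pos hir, if_neg hij, sub_nonneg]
          have hmin : t ≤ c i / β i := hjmin i (by simp [hir])
          have hβi := hβ i hir
          calc t * β i ≤ (c i / β i) * β i :=
                mul_le_mul_of_nonneg_right hmin hβi.le
            _ = c i := div_mul_cancel₀ _ hβi.ne'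
        · simp only [if_neg hir]
          exact hc i
    · rw [key_sum k r a β q hq j]
      refine Finset.sum_congr rfl fun i _ => ?_
      congr 1
      have hej : (if (j : ℕ) < r then (if j = j then t else c j - t * β j) else c j) = t := by
        simp [hjr]
      rw [hej]
      by_cases hij : i = j
      · subst hij
        have hci : c i = t * β i := by rw [ht, div_mul_cancel₀ _ hβj.ne']
        simp [hjr, hci]
      · by_cases hir : (i : ℕ) < r
        · simp only [if_pos hir, if_neg hij]
          ring
        · simp [hir, hij]
  · rintro ⟨j, hjr, c, hc, rfl⟩
    refine ⟨fun i => (if (i : ℕ) < r then c j * β i else 0) + (if i = j then 0 else c i),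
      ?_, key_sum k r a β q hq j c⟩
    intro i
    apply add_nonneg
    · by_cases hir : (i : ℕ) < r
      · simp only [if_pos hir]; exact mul_nonneg (hc j) (hβ i hir).le
      · simp [hir]
    · by_cases hij : i = j <;> simp [hij, hc i]
end

section
/- Let G be a group, Γ = {ξ_1, ..., ξ_k} a finite set of homomorphisms G → R all factoring through an epimorphism ζ: G → Z^n via linear forms ξ̄_i, and let C_Γ = {x ∈ R^n : ξ̄_i(x) ≤ 0 for all i}. If C_Γ is a solid cone (has nonempty interior), then Λ̂_Γ = ∪_{g ∈ G} g · Λ̂_Γ^-, where Λ̂_Γ = ∩_i Λ̂_{ξ_i} and Λ̂_Γ^- = ∩_i Λ̂_{ξ_i}^-. -/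
/-- The Novikov condition for formal series over `G`. -/
def NovCond7 {G : Type*} (ξ : G → ℝ) (lam : G → ℤ) : Prop :=
  ∀ C : ℝ, {g : G | lam g ≠ 0 ∧ C ≤ ξ g}.Finite

/-- Translation invariance of the Novikov condition, for additive `Ξ`. -/
lemma novCond7_shift {G : Type*} [Group G] (Ξ : G → ℝ)
    (hadd : ∀ g h : G, Ξ (g * h) = Ξ g + Ξ h) (a : G) (lam : G → ℤ)
    (h : NovCond7 Ξ lam) : NovCond7 Ξ (fun u => lam (a * u)) := by
  intro C
  have hS := h (C + Ξ a)
  have hset : {g : G | (fun u => lam (a * u)) g ≠ 0 ∧ C ≤ Ξ g} =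
      (fun g => a * g) ⁻¹' {g : G | lam g ≠ 0 ∧ C + Ξ a ≤ Ξ g} := by
    ext g
    simp only [Set.mem_setOf_eq, Set.mem_preimage, hadd]
    constructor
    · rintro ⟨h1, h2⟩; exact ⟨h1, by linarith⟩
    · rintro ⟨h1, h2⟩; exact ⟨h1, by linarith⟩
  rw [hset]
  exact hS.preimage (mul_right_injective a).injOn


/-- Let `Γ = {ξ_1, ..., ξ_k}` factor through an epimorphism `ζ : G → ℤ^n`
via linear forms `ξbar i`. If the cone `C_Γ = {x | ξbar i x ≤ 0 ∀ i}` is solid, then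
`Λ̂_Γ = ⋃_{g ∈ G} g · Λ̂_Γ⁻`. -/
theorem stmt7 {G : Type*} [Group G] (n k : ℕ) (ζ : G → Fin n → ℤ)
    (hζhom : ∀ g h : G, ζ (g * h) = ζ g + ζ h) (hζsurj : Function.Surjective ζ)
    (ξbar : Fin k → ((Fin n → ℝ) →ₗ[ℝ] ℝ))
    (hsolid : (interior {x : Fin n → ℝ | ∀ i, ξbar i x ≤ 0}).Nonempty) :
    -- Λ̂_Γ = ⋃_g g · Λ̂_Γ⁻
    {lam : G → ℤ | ∀ i, NovCond7 (fun g => ξbar i (fun j => (ζ g j : ℝ))) lam} =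
      ⋃ g : G, (fun lam : G → ℤ => (fun u => lam (g⁻¹ * u))) ''
        {lam : G → ℤ |
          (∀ i, NovCond7 (fun h => ξbar i (fun j => (ζ h j : ℝ))) lam) ∧
          ∀ h : G, lam h ≠ 0 → ∀ i, ξbar i (fun j => (ζ h j : ℝ)) ≤ 0} := by
  have hΞadd : ∀ (i : Fin k) (g h : G),
      ξbar i (fun j => ((ζ (g * h)) j : ℝ)) =
      ξbar i (fun j => (ζ g j : ℝ)) + ξbar i (fun j => (ζ h j : ℝ)) := by
    intro i g h
    rw [show (fun j => ((ζ (g * h)) j : ℝ)) =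
        (fun j => (ζ g j : ℝ)) + (fun j => (ζ h j : ℝ)) by
      funext j; rw [hζhom]; push_cast; simp [Pi.add_apply]]
    exact map_add _ _ _
  ext lam
  simp only [Set.mem_setOf_eq, Set.mem_iUnion, Set.mem_image]
  constructor
  · intro hlam
    -- interior point and ball
    obtain ⟨x₀, hx₀⟩ := hsolid
    obtain ⟨ε, hε, hball⟩ := Metric.isOpen_iff.1 isOpen_interior x₀ hx₀
    have hballC : Metric.ball x₀ ε ⊆ {x : Fin n → ℝ | ∀ i, ξbar i x ≤ 0} :=
      hball.trans interior_subset
    -- basis vectors and coefficient bound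
    set e : Fin n → (Fin n → ℝ) := fun i j => if i = j then 1 else 0 with he
    set K : Fin k → ℝ := fun i => ∑ j, |ξbar i (e j)| with hKdef
    have hKnonneg : ∀ i, 0 ≤ K i := fun i => Finset.sum_nonneg fun j _ => abs_nonneg _
    have hbound : ∀ (i : Fin k) (w : Fin n → ℝ), (∀ j, |w j| ≤ 1) → |ξbar i w| ≤ K i := by
      intro i w hw
      rw [LinearMap.pi_apply_eq_sum_univ]
      calc |∑ j, w j • ξbar i (e j)| ≤ ∑ j, |w j • ξbar i (e j)| :=
            Finset.abs_sum_le_sum_abs _ _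
        _ ≤ ∑ j, |ξbar i (e j)| := Finset.sum_le_sum fun j _ => by
            rw [smul_eq_mul, abs_mul]
            exact mul_le_of_le_one_left (abs_nonneg _) (hw j)
    -- a vector realizing K i
    have hreach : ∀ i : Fin k, ∃ v : Fin n → ℝ, (∀ j, |v j| ≤ 1) ∧ ξbar i v = K i := by
      intro i
      refine ⟨fun j => if 0 ≤ ξbar i (e j) then 1 else -1, fun j => by dsimp only; split <;> simp, ?_⟩
      rw [LinearMap.pi_apply_eq_sum_univ]
      refine Finset.sum_congr rfl fun j _ => ?_
      by_cases h0 : 0 ≤ ξbar i (e j)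
      · simp [h0, abs_of_nonneg h0]; rfl
      · simp [h0, abs_of_neg (lt_of_not_ge h0)]; rfl
    -- key estimate: ξbar i x₀ ≤ -(ε/2) * K i
    have hkey : ∀ i : Fin k, ξbar i x₀ ≤ -(ε / 2) * K i := by
      intro i
      obtain ⟨v, hv1, hvK⟩ := hreach i
      have hmem : x₀ + (ε / 2) • v ∈ Metric.ball x₀ ε := by
        rw [Metric.mem_ball, dist_eq_norm, add_sub_cancel_left]
        have h2 : ‖(ε / 2) • v‖ ≤ ε / 2 := by
          rw [pi_norm_le_iff_of_nonneg (by linarith)]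
          intro j
          rw [Pi.smul_apply, norm_smul, Real.norm_eq_abs, Real.norm_eq_abs,
            abs_of_nonneg (by linarith : (0:ℝ) ≤ ε / 2)]
          calc ε / 2 * |v j| ≤ ε / 2 * 1 := by
                exact mul_le_mul_of_nonneg_left (hv1 j) (by linarith)
            _ = ε / 2 := mul_one _
        linarith
      have := hballC hmem i
      rw [map_add, map_smul, hvK, smul_eq_mul] at this
      linarith
    -- bounds M i on ξ i over the support of lam
    have hM : ∀ i : Fin k, ∃ M : ℝ, 0 ≤ M ∧
        ∀ u : G, lam u ≠ 0 → ξbar i (fun j => (ζ u j : ℝ)) ≤ M := by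
      intro i
      have hfin := hlam i 0
      obtain ⟨M, hMb⟩ := (hfin.image (fun u => ξbar i (fun j => (ζ u j : ℝ)))).bddAbove
      refine ⟨max M 0, le_max_right _ _, fun u hu => ?_⟩
      by_cases h0 : 0 ≤ ξbar i (fun j => (ζ u j : ℝ))
      · exact le_max_of_le_left (hMb (Set.mem_image_of_mem _ ⟨hu, h0⟩))
      · exact le_max_of_le_right (le_of_not_ge h0)
    choose M hM0 hMle using hM
    -- choose t large
    obtain ⟨T, hT⟩ := Finite.exists_le (fun i => (M i + K i) / (ε / 2 * K i))
    obtain ⟨t, ht⟩ := exists_nat_ge T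
    -- the integer vector z
    set z : Fin n → ℤ := fun j => ⌈-((t : ℝ) * x₀ j)⌉ with hz
    have hzw : ∀ j, |(z j : ℝ) + (t : ℝ) * x₀ j| ≤ 1 := by
      intro j
      rw [abs_le]
      constructor
      · have := Int.le_ceil (-((t : ℝ) * x₀ j)); linarith
      · have := Int.ceil_lt_add_one (-((t : ℝ) * x₀ j)); linarith
    -- ξbar i z ≥ M i for every i (handling K i = 0 separately)
    have hzbig : ∀ (i : Fin k) (u : G), lam u ≠ 0 →
        ξbar i (fun j => (ζ u j : ℝ)) ≤ ξbar i (fun j => (z j : ℝ)) := by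
      intro i u hu
      by_cases hK0 : K i = 0
      · -- then ξbar i vanishes identically
        have hzero : ∀ x : Fin n → ℝ, ξbar i x = 0 := by
          intro x
          rw [LinearMap.pi_apply_eq_sum_univ]
          refine Finset.sum_eq_zero fun j _ => ?_
          have : |ξbar i (e j)| = 0 := by
            have := (Finset.sum_eq_zero_iff_of_nonneg
              (fun j _ => abs_nonneg (ξbar i (e j)))).1 hK0 j (Finset.mem_univ j)
            exact this
          rw [abs_eq_zero] at this
          rw [show (fun j' => if j = j' then (1:ℝ) else 0) = e j from rfl, this, smul_zero]
        rw [hzero, hzero]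
      · have hKpos : 0 < K i := lt_of_le_of_ne (hKnonneg i) (Ne.symm hK0)
        -- decompose z = -t•x₀ + w
        have hdec : (fun j => (z j : ℝ)) =
            (-(t : ℝ)) • x₀ + fun j => ((z j : ℝ) + (t : ℝ) * x₀ j) := by
          funext j; simp only [Pi.add_apply, Pi.smul_apply, smul_eq_mul]; ring
        have hwb := hbound i (fun j => ((z j : ℝ) + (t : ℝ) * x₀ j)) hzw
        have hξz : (t : ℝ) * (ε / 2 * K i) - K i ≤ ξbar i (fun j => (z j : ℝ)) := by
          rw [hdec, map_add, map_smul, smul_eq_mul]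
          have h1 : -(t : ℝ) * ξbar i x₀ ≥ (t : ℝ) * (ε / 2 * K i) := by
            have := hkey i
            nlinarith [Nat.cast_nonneg (α := ℝ) t]
          have h2 : -K i ≤ ξbar i (fun j => ((z j : ℝ) + (t : ℝ) * x₀ j)) :=
            neg_le_of_abs_le hwb
          linarith
        have hMt : M i + K i ≤ (t : ℝ) * (ε / 2 * K i) := by
          have hB := le_trans (hT i) ht
          rw [div_le_iff₀ (by positivity)] at hB
          linarith [hB]
        have := hMle i u hu
        linarith
    -- pick g with ζ g = z
    obtain ⟨g, hg⟩ := hζsurj z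
    refine ⟨g, fun u => lam (g * u), ⟨?_, ?_⟩, ?_⟩
    · intro i
      exact novCond7_shift _ (hΞadd i) g lam (hlam i)
    · intro h hh i
      have hzb := hzbig i (g * h) hh
      have hadd := hΞadd i g h
      rw [hg] at hadd
      linarith
    · funext u
      simp [mul_inv_cancel_left]
  · rintro ⟨g, lam', ⟨hnov, _⟩, rfl⟩ i
    exact novCond7_shift _ (hΞadd i) g⁻¹ lam' (hnov i)
end

section
/- Let R be a commutative ring and k ≥ 1. For each i ∈ {1, ..., k}, the ring of special power series R[[[t_1, ..., t_k]]] embeds naturally (as a ring) into the power series ring in the single variable t_i with coefficients in the polynomial ring in the remaining variables: R[[[t_1, ..., t_k]]] ⊆ (R[t_1, ..., t_{i-1}, t_{i+1}, ..., t_k])[[t_i]]. -/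
namespace Stmt12Aux

variable {k : ℕ} {R : Type*} [CommRing R]

noncomputable def emb (i : Fin k) (J : {j : Fin k // j ≠ i} →₀ ℕ) (n : ℕ) : Fin k →₀ ℕ :=
  Finsupp.embDomain ⟨Subtype.val, Subtype.val_injective⟩ J + Finsupp.single i n

lemma emb_apply_i (i : Fin k) (J : {j : Fin k // j ≠ i} →₀ ℕ) (n : ℕ) : emb i J n i = n := by
  have h1 : Finsupp.embDomain ⟨Subtype.val, Subtype.val_injective⟩ J i = 0 := by
    apply Finsupp.embDomain_notin_range
    rintro ⟨⟨j, hj⟩, hh⟩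
    exact hj hh
  simp [emb, h1]

lemma emb_apply_ne (i : Fin k) (J : {j : Fin k // j ≠ i} →₀ ℕ) (n : ℕ) {j : Fin k}
    (h : j ≠ i) : emb i J n j = J ⟨j, h⟩ := by
  have h1 := Finsupp.embDomain_apply_self ⟨Subtype.val, Subtype.val_injective⟩ J (⟨j, h⟩ : {j : Fin k // j ≠ i})
  simp only [Function.Embedding.coeFn_mk] at h1
  simp only [emb, Finsupp.add_apply]
  rw [Finsupp.single_apply, if_neg (fun hh => h hh.symm), add_zero]
  exact h1

lemma subtypeDomain_emb (i : Fin k) (J : {j : Fin k // j ≠ i} →₀ ℕ) (n : ℕ) :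
    Finsupp.subtypeDomain (· ≠ i) (emb i J n) = J := by
  ext ⟨j, hj⟩
  simp only [Finsupp.subtypeDomain_apply]
  exact emb_apply_ne i J n hj

lemma emb_subtypeDomain (i : Fin k) (I : Fin k →₀ ℕ) :
    emb i (Finsupp.subtypeDomain (· ≠ i) I) (I i) = I := by
  ext j
  by_cases h : j = i
  · subst h; exact emb_apply_i ..
  · rw [emb_apply_ne i _ _ h]; simp

lemma emb_add (i : Fin k) (J₁ J₂ : {j : Fin k // j ≠ i} →₀ ℕ) (n₁ n₂ : ℕ) :
    emb i (J₁ + J₂) (n₁ + n₂) = emb i J₁ n₁ + emb i J₂ n₂ := by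
  ext j
  by_cases h : j = i
  · subst h; simp [emb_apply_i]
  · simp [emb_apply_ne i _ _ h]

lemma emb_eq_zero_iff (i : Fin k) (J : {j : Fin k // j ≠ i} →₀ ℕ) (n : ℕ) :
    emb i J n = 0 ↔ J = 0 ∧ n = 0 := by
  constructor
  · intro h
    constructor
    · rw [← subtypeDomain_emb i J n, h]; rfl
    · rw [← emb_apply_i i J n, h]; rfl
  · rintro ⟨rfl, rfl⟩
    ext j
    by_cases h : j = i
    · subst h; simp [emb_apply_i]
    · simp [emb_apply_ne i _ _ h]


def SpSet (k : ℕ) (R : Type*) [CommRing R] : Set (MvPowerSeries (Fin k) R) :=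
  {f | ∀ m : ℕ,
    {I : Fin k →₀ ℕ | (∃ j, I j ≤ m) ∧ MvPowerSeries.coeff (R := R) I f ≠ 0}.Finite}

lemma one_mem_sp : (1 : MvPowerSeries (Fin k) R) ∈ SpSet k R := by
  intro m
  apply (Set.finite_singleton (0 : Fin k →₀ ℕ)).subset
  rintro I ⟨-, hI⟩
  rw [MvPowerSeries.coeff_one] at hI
  simp only [Set.mem_singleton_iff]
  by_contra h
  exact hI (if_neg h)

lemma zero_mem_sp : (0 : MvPowerSeries (Fin k) R) ∈ SpSet k R := by
  intro m
  apply Set.finite_empty.subset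
  rintro I ⟨-, hI⟩
  simp at hI

lemma add_mem_sp {f g : MvPowerSeries (Fin k) R} (hf : f ∈ SpSet k R) (hg : g ∈ SpSet k R) :
    f + g ∈ SpSet k R := by
  intro m
  apply ((hf m).union (hg m)).subset
  rintro I ⟨hj, hI⟩
  rw [map_add] at hI
  by_cases h : MvPowerSeries.coeff (R := R) I f = 0
  · right; exact ⟨hj, fun h' => hI (by rw [h, h', add_zero])⟩
  · left; exact ⟨hj, h⟩

lemma neg_mem_sp {f : MvPowerSeries (Fin k) R} (hf : f ∈ SpSet k R) : -f ∈ SpSet k R := by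
  intro m
  apply (hf m).subset
  rintro I ⟨hj, hI⟩
  rw [map_neg] at hI
  exact ⟨hj, fun h => hI (by rw [h, neg_zero])⟩

lemma mul_mem_sp {f g : MvPowerSeries (Fin k) R} (hf : f ∈ SpSet k R) (hg : g ∈ SpSet k R) :
    f * g ∈ SpSet k R := by
  intro m
  apply (((hf m).prod (hg m)).image (fun p => p.1 + p.2)).subset
  rintro I ⟨⟨j, hj⟩, hI⟩
  rw [MvPowerSeries.coeff_mul] at hI
  obtain ⟨p, hp, hne⟩ := Finset.exists_ne_zero_of_sum_ne_zero hI
  rw [Finset.HasAntidiagonal.mem_antidiagonal] at hp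
  refine ⟨p, ⟨⟨⟨j, ?_⟩, left_ne_zero_of_mul hne⟩, ⟨⟨j, ?_⟩, right_ne_zero_of_mul hne⟩⟩, hp⟩
  · calc p.1 j ≤ p.1 j + p.2 j := Nat.le_add_right _ _
      _ = I j := by rw [← hp]; rfl
      _ ≤ m := hj
  · calc p.2 j ≤ p.1 j + p.2 j := Nat.le_add_left _ _
      _ = I j := by rw [← hp]; rfl
      _ ≤ m := hj

noncomputable def poly (i : Fin k) (f : MvPowerSeries (Fin k) R) (hf : f ∈ SpSet k R)
    (n : ℕ) : MvPolynomial {j : Fin k // j ≠ i} R :=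
  have hfin : {J : {j : Fin k // j ≠ i} →₀ ℕ |
      MvPowerSeries.coeff (R := R) (emb i J n) f ≠ 0}.Finite := by
    apply ((hf n).image (fun I => Finsupp.subtypeDomain (· ≠ i) I)).subset
    intro J hJ
    exact ⟨emb i J n, ⟨⟨i, (emb_apply_i i J n).le⟩, hJ⟩, subtypeDomain_emb i J n⟩
  ⟨hfin.toFinset, fun J => MvPowerSeries.coeff (R := R) (emb i J n) f, by
    intro J; simp [Set.Finite.mem_toFinset]⟩

lemma coeff_poly (i : Fin k) (f : MvPowerSeries (Fin k) R) (hf : f ∈ SpSet k R) (n : ℕ)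
    (J : {j : Fin k // j ≠ i} →₀ ℕ) :
    MvPolynomial.coeff J (poly i f hf n) = MvPowerSeries.coeff (R := R) (emb i J n) f := rfl


def spSubring (k' : ℕ) (R' : Type*) [CommRing R'] : Subring (MvPowerSeries (Fin k') R') where
  carrier := SpSet k' R'
  one_mem' := one_mem_sp
  zero_mem' := zero_mem_sp
  add_mem' := add_mem_sp
  neg_mem' := neg_mem_sp
  mul_mem' := mul_mem_sp

noncomputable def phiFun (i : Fin k) (f : spSubring k R) :
    PowerSeries (MvPolynomial {j : Fin k // j ≠ i} R) :=
  PowerSeries.mk fun n => poly i (f : MvPowerSeries (Fin k) R) f.2 n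

lemma coeff_phiFun (i : Fin k) (f : spSubring k R) (n : ℕ) (J : {j : Fin k // j ≠ i} →₀ ℕ) :
    MvPolynomial.coeff J
      (PowerSeries.coeff (R := MvPolynomial {j : Fin k // j ≠ i} R) n (phiFun i f)) =
    MvPowerSeries.coeff (R := R) (emb i J n) (f : MvPowerSeries (Fin k) R) := by
  rw [phiFun, PowerSeries.coeff_mk]
  rfl

lemma phiFun_one (i : Fin k) : phiFun i (1 : spSubring k R) = 1 := by
  refine PowerSeries.ext fun n => MvPolynomial.ext _ _ fun J => ?_
  rw [coeff_phiFun]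
  rw [show ((1 : spSubring k R) : MvPowerSeries (Fin k) R) = 1 from rfl]
  rw [MvPowerSeries.coeff_one, PowerSeries.coeff_one]
  by_cases hn : n = 0
  · subst hn
    rw [if_pos rfl, MvPolynomial.coeff_one]
    by_cases hJ : J = 0
    · rw [if_pos ((emb_eq_zero_iff i J 0).mpr ⟨hJ, rfl⟩), if_pos hJ.symm]
    · rw [if_neg (fun h => hJ (((emb_eq_zero_iff i J 0).mp h).1)),
        if_neg (fun h => hJ h.symm)]
  · rw [if_neg hn, MvPolynomial.coeff_zero,
      if_neg (fun h => hn (((emb_eq_zero_iff i J n).mp h).2))]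

lemma phiFun_add (i : Fin k) (f g : spSubring k R) :
    phiFun i (f + g) = phiFun i f + phiFun i g := by
  refine PowerSeries.ext fun n => MvPolynomial.ext _ _ fun J => ?_
  rw [map_add, MvPolynomial.coeff_add, coeff_phiFun, coeff_phiFun, coeff_phiFun]
  rw [show ((f + g : spSubring k R) : MvPowerSeries (Fin k) R)
      = (f : MvPowerSeries (Fin k) R) + g from rfl]
  rw [map_add]

lemma phiFun_mul (i : Fin k) (f g : spSubring k R) :
    phiFun i (f * g) = phiFun i f * phiFun i g := by
  refine PowerSeries.ext fun n => MvPolynomial.ext _ _ fun J => ?_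
  rw [coeff_phiFun]
  rw [show ((f * g : spSubring k R) : MvPowerSeries (Fin k) R)
      = (f : MvPowerSeries (Fin k) R) * g from rfl]
  rw [MvPowerSeries.coeff_mul, PowerSeries.coeff_mul, MvPolynomial.coeff_sum]
  simp only [MvPolynomial.coeff_mul, coeff_phiFun]
  rw [← Finset.sum_product']
  refine Finset.sum_nbij'
    (fun I => ((I.1 i, I.2 i), (Finsupp.subtypeDomain (· ≠ i) I.1,
      Finsupp.subtypeDomain (· ≠ i) I.2)))
    (fun pq => (emb i pq.2.1 pq.1.1, emb i pq.2.2 pq.1.2)) ?_ ?_ ?_ ?_ ?_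
  · rintro ⟨I₁, I₂⟩ hI
    rw [Finset.HasAntidiagonal.mem_antidiagonal] at hI
    rw [Finset.mem_product, Finset.HasAntidiagonal.mem_antidiagonal, Finset.HasAntidiagonal.mem_antidiagonal]
    constructor
    · have := congrArg (fun I : Fin k →₀ ℕ => I i) hI
      simpa [emb_apply_i] using this
    · have := congrArg (Finsupp.subtypeDomain (· ≠ i)) hI
      rw [Finsupp.subtypeDomain_add, subtypeDomain_emb] at this
      exact this
  · rintro ⟨⟨p₁, p₂⟩, ⟨q₁, q₂⟩⟩ hpq
    rw [Finset.mem_product, Finset.HasAntidiagonal.mem_antidiagonal, Finset.HasAntidiagonal.mem_antidiagonal] at hpq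
    rw [Finset.HasAntidiagonal.mem_antidiagonal]
    dsimp only
    rw [← emb_add, hpq.1, hpq.2]
  · rintro ⟨I₁, I₂⟩ _
    dsimp only
    rw [emb_subtypeDomain, emb_subtypeDomain]
  · rintro ⟨⟨p₁, p₂⟩, ⟨q₁, q₂⟩⟩ _
    dsimp only
    rw [emb_apply_i, emb_apply_i, subtypeDomain_emb, subtypeDomain_emb]
  · rintro ⟨I₁, I₂⟩ _
    dsimp only
    rw [emb_subtypeDomain, emb_subtypeDomain]

lemma phiFun_zero (i : Fin k) : phiFun i (0 : spSubring k R) = 0 := by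
  refine PowerSeries.ext fun n => MvPolynomial.ext _ _ fun J => ?_
  rw [coeff_phiFun]
  simp

noncomputable def phi (i : Fin k) :
    spSubring k R →+* PowerSeries (MvPolynomial {j : Fin k // j ≠ i} R) where
  toFun := phiFun i
  map_one' := phiFun_one i
  map_mul' := phiFun_mul i
  map_zero' := phiFun_zero i
  map_add' := phiFun_add i

lemma phi_apply (i : Fin k) (f : spSubring k R) : phi i f = phiFun i f := rfl

lemma phi_injective (i : Fin k) : Function.Injective (phi (R := R) i) := by
  intro f g h
  refine Subtype.ext (MvPowerSeries.ext fun I => ?_)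
  have h2 := congrArg (fun F => MvPolynomial.coeff (Finsupp.subtypeDomain (· ≠ i) I)
    (PowerSeries.coeff (R := MvPolynomial {j : Fin k // j ≠ i} R) (I i) F)) h
  simp only [phi_apply, coeff_phiFun] at h2
  rwa [emb_subtypeDomain] at h2

end Stmt12Aux

open Stmt12Aux in
/-- The ring of special power series `R[[[t_1, ..., t_k]]]` embeds as a
ring into the power series ring in the single variable `t_i` with coefficients in the
polynomial ring in the remaining variables, the embedding regrouping a special series by
powers of `t_i` (so coefficients are matched in the natural way). -/
theorem stmt12 (k : ℕ) (R : Type*) [CommRing R] (i : Fin k) :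
    ∃ S : Subring (MvPowerSeries (Fin k) R),
      (S : Set (MvPowerSeries (Fin k) R)) =
        {f | ∀ m : ℕ,
          {I : Fin k →₀ ℕ | (∃ j, I j ≤ m) ∧ MvPowerSeries.coeff (R := R) I f ≠ 0}.Finite} ∧
      ∃ φ : S →+* PowerSeries (MvPolynomial {j : Fin k // j ≠ i} R),
        Function.Injective φ ∧
        ∀ (f : S) (n : ℕ) (J : {j : Fin k // j ≠ i} →₀ ℕ),
          MvPolynomial.coeff J (PowerSeries.coeff (R := MvPolynomial {j : Fin k // j ≠ i} R) n (φ f)) =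
            MvPowerSeries.coeff (R := R)
              (Finsupp.embDomain ⟨Subtype.val, Subtype.val_injective⟩ J + Finsupp.single i n)
              (f : MvPowerSeries (Fin k) R) := by
  refine ⟨spSubring k R, rfl, phi i, phi_injective i, fun f n J => ?_⟩
  rw [phi_apply, coeff_phiFun]
  rfl
end

section
/- Let A be a Σ-twisted Laurent polynomial ring in variables τ_1, ..., τ_k over R, A_0 the left R-submodule generated by {τ^I : I ∈ N^k}, and for j ∈ {1, ..., k}, A_j the left R-submodule generated by {τ^I : I ∈ Z^k, i_j ≥ 0}. Let τ = τ_1 ⋯ τ_k and n ∈ N. Then the direct sum J_n = ⊕_j J_{n,j} : A_0/τ^n A_0 → ⊕_j (A_j / τ_j^n A_j) of the maps induced by the inclusions A_0 ↪ A_j is injective. -/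
namespace Stmt14Aux

variable {A : Type*} [Ring A]

/-- Units of `A` lying in `R` with inverse in `R`. -/
def Cu (R : Subring A) : Subgroup Aˣ where
  carrier := {u : Aˣ | (u : A) ∈ R ∧ ((u⁻¹ : Aˣ) : A) ∈ R}
  one_mem' := by refine ⟨by simpa using R.one_mem, by simpa using R.one_mem⟩
  mul_mem' := by
    rintro a b ⟨ha1, ha2⟩ ⟨hb1, hb2⟩
    refine ⟨by simpa using R.mul_mem ha1 hb1, ?_⟩
    have h : (((a * b)⁻¹ : Aˣ) : A) = ((b⁻¹ : Aˣ) : A) * ((a⁻¹ : Aˣ) : A) := by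
      simp [mul_inv_rev]
    rw [h]; exact R.mul_mem hb2 ha2
  inv_mem' := by
    rintro a ⟨h1, h2⟩
    exact ⟨h2, by simpa using h1⟩

/-- Units whose conjugation preserves `R` (in the iff sense). -/
def Nsub (R : Subring A) : Subgroup Aˣ where
  carrier := {w : Aˣ | ∀ x : A, x ∈ R ↔ (w : A) * x * ((w⁻¹ : Aˣ) : A) ∈ R}
  one_mem' := by intro x; simp
  mul_mem' := by
    intro a b ha hb x
    rw [hb x, ha ((b : A) * x * ((b⁻¹ : Aˣ) : A))]
    have h : ((a : A)) * ((b : A) * x * ((b⁻¹ : Aˣ) : A)) * ((a⁻¹ : Aˣ) : A)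
        = ((a * b : Aˣ) : A) * x * (((a * b)⁻¹ : Aˣ) : A) := by
      simp [mul_inv_rev, mul_assoc]
    rw [h]
  inv_mem' := by
    intro a ha x
    have h := ha (((a⁻¹ : Aˣ) : A) * x * ((a : Aˣ) : A))
    have e : ((a : Aˣ) : A) * (((a⁻¹ : Aˣ) : A) * x * ((a : Aˣ) : A)) * ((a⁻¹ : Aˣ) : A) = x := by
      simp [mul_assoc, Units.mul_inv_cancel_left, Units.mul_inv_cancel_right]
    rw [e] at h
    simpa using h.symm

lemma cu_conj {R : Subring A} {w u : Aˣ} (hw : w ∈ Nsub R) (hu : u ∈ Cu R) :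
    w * u * w⁻¹ ∈ Cu R := by
  obtain ⟨h1, h2⟩ := hu
  constructor
  · have h := (hw ((u : Aˣ) : A)).mp h1
    have e : ((w * u * w⁻¹ : Aˣ) : A) = (w : A) * (u : A) * ((w⁻¹ : Aˣ) : A) := by
      simp
    rw [e]; exact h
  · have h := (hw ((u⁻¹ : Aˣ) : A)).mp h2
    have e : (((w * u * w⁻¹)⁻¹ : Aˣ) : A) = (w : A) * ((u⁻¹ : Aˣ) : A) * ((w⁻¹ : Aˣ) : A) := by
      simp [mul_inv_rev, mul_assoc]
    rw [e]; exact h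

lemma cu_le_N (R : Subring A) : Cu R ≤ Nsub R := by
  rintro u ⟨h1, h2⟩ x
  constructor
  · intro hx
    exact R.mul_mem (R.mul_mem h1 hx) h2
  · intro hx
    have : x = ((u⁻¹ : Aˣ) : A) * ((u : A) * x * ((u⁻¹ : Aˣ) : A)) * (u : A) := by
      simp [mul_assoc, Units.inv_mul_cancel_left, Units.inv_mul_cancel_right]
    rw [this]
    exact R.mul_mem (R.mul_mem h2 hx) h1


lemma comm_ofFn_add {M : Type*} [Group M] : ∀ {k : ℕ} (g : Fin k → M),
    (∀ i j, Commute (g i) (g j)) → ∀ (e f : Fin k → ℤ),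
    (List.ofFn fun i => g i ^ (e i + f i)).prod
      = (List.ofFn fun i => g i ^ e i).prod * (List.ofFn fun i => g i ^ f i).prod := by
  intro k
  induction k with
  | zero => intro g hg e f; simp
  | succ m ih =>
    intro g hg e f
    simp only [List.ofFn_succ, List.prod_cons]
    rw [ih (fun i => g i.succ) (fun i j => hg _ _) (fun i => e i.succ) (fun i => f i.succ)]
    have h1 : Commute (g 0 ^ f 0) (List.ofFn fun i : Fin m => g i.succ ^ e i.succ).prod := by
      apply Commute.list_prod_right
      intro x hx
      simp only [List.mem_ofFn] at hx
      obtain ⟨i, rfl⟩ := hx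
      exact (hg 0 i.succ).zpow_zpow _ _
    rw [zpow_add]
    rw [mul_assoc, mul_assoc, ← mul_assoc (g 0 ^ f 0), h1.eq, mul_assoc]

lemma prod_ofFn_single {M : Type*} [Monoid M] : ∀ {k : ℕ} (g : Fin k → M) (j : Fin k),
    (∀ i, i ≠ j → g i = 1) → (List.ofFn g).prod = g j := by
  intro k
  induction k with
  | zero => exact fun g j _ => j.elim0
  | succ m ih =>
    intro g j hg
    simp only [List.ofFn_succ, List.prod_cons]
    rcases Fin.eq_zero_or_eq_succ j with hj | ⟨j', rfl⟩
    · subst hj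
      have : ∀ i : Fin m, g i.succ = 1 := fun i => hg i.succ (Fin.succ_ne_zero i)
      have hp : (List.ofFn fun i : Fin m => g i.succ).prod = 1 := by
        apply List.prod_eq_one
        intro x hx
        simp only [List.mem_ofFn] at hx
        obtain ⟨i, rfl⟩ := hx
        exact this i
      rw [hp, mul_one]
    · have h0 : g 0 = 1 := hg 0 (by simp [Fin.ext_iff])
      rw [h0, one_mul]
      exact ih (fun i => g i.succ) j' fun i hi => hg i.succ (by simpa [Fin.succ_inj] using hi)


lemma main_add' {R : Subring A} {k : ℕ} {τ : Fin k → Aˣ} (hτ : ∀ i, τ i ∈ Nsub R)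
    (hc : ∀ i j, (τ i * τ j * (τ i)⁻¹ * (τ j)⁻¹ : Aˣ) ∈ Cu R) (I J : Fin k →₀ ℤ) :
    ∃ u ∈ Cu R, (List.ofFn fun i => τ i ^ I i).prod * (List.ofFn fun i => τ i ^ J i).prod
      = u * (List.ofFn fun i => τ i ^ (I + J) i).prod := by
  classical
  set U : (Fin k →₀ ℤ) → Aˣ := fun I => (List.ofFn fun i => τ i ^ I i).prod with hU
  have hUN : ∀ I, U I ∈ Nsub R := by
    intro I
    apply list_prod_mem
    intro x hx
    simp only [hU, List.mem_ofFn] at hx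
    obtain ⟨i, rfl⟩ := hx
    exact zpow_mem (hτ i) _
  set N := Nsub R
  set C' : Subgroup N := (Cu R).subgroupOf N
  haveI : C'.Normal := by
    constructor
    intro c hc' g
    rw [Subgroup.mem_subgroupOf] at hc' ⊢
    simpa using cu_conj g.2 hc'
  set π : N →* N ⧸ C' := QuotientGroup.mk' C' with hπ
  set q : Fin k → N ⧸ C' := fun i => π ⟨τ i, hτ i⟩ with hq
  have hcommq : ∀ i j, Commute (q i) (q j) := by
    intro i j
    show q i * q j = q j * q i
    simp only [hq, ← map_mul]
    apply (QuotientGroup.eq (s := C')).mpr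
    rw [Subgroup.mem_subgroupOf]
    have key : ((⟨τ i, hτ i⟩ * ⟨τ j, hτ j⟩ : N)⁻¹ * (⟨τ j, hτ j⟩ * ⟨τ i, hτ i⟩) : N)
        = ((τ i * τ j)⁻¹ * (τ j * τ i) : Aˣ) := rfl
    rw [key]
    have e : ((τ i * τ j)⁻¹ * (τ j * τ i) : Aˣ)
        = (τ i * τ j)⁻¹ * (τ j * τ i * (τ j)⁻¹ * (τ i)⁻¹) * ((τ i * τ j)⁻¹)⁻¹ := by
      group
    rw [e]
    exact cu_conj ((Nsub R).inv_mem (mul_mem (hτ i) (hτ j))) (hc j i)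
  have hπU : ∀ K : Fin k →₀ ℤ, π ⟨U K, hUN K⟩ = (List.ofFn fun i => q i ^ K i).prod := by
    intro K
    have e1 : (⟨U K, hUN K⟩ : N) = (List.ofFn fun i => (⟨τ i, hτ i⟩ : N) ^ K i).prod := by
      ext
      push_cast [hU, List.map_ofFn]
      rfl
    rw [e1, map_list_prod, List.map_ofFn]
    rfl
  have hadd : π ⟨U I * U J, mul_mem (hUN I) (hUN J)⟩ = π ⟨U (I + J), hUN _⟩ := by
    have : (⟨U I * U J, _⟩ : N) = (⟨U I, hUN I⟩ : N) * ⟨U J, hUN J⟩ := rfl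
    rw [this, map_mul, hπU, hπU, hπU]
    rw [show (fun i => q i ^ (I + J) i) = fun i => q i ^ (I i + J i) by
      funext i; rw [Finsupp.add_apply]]
    exact (comm_ofFn_add q hcommq I J).symm
  have hmem : ((⟨U I * U J, mul_mem (hUN I) (hUN J)⟩ : N)⁻¹ * ⟨U (I + J), hUN _⟩ : N) ∈ C' :=
    (QuotientGroup.eq (s := C')).mp hadd
  rw [Subgroup.mem_subgroupOf] at hmem
  have hmem' : ((U I * U J)⁻¹ * U (I + J) : Aˣ) ∈ Cu R := hmem
  refine ⟨(U I * U J) * ((U I * U J)⁻¹ * U (I + J))⁻¹ * (U I * U J)⁻¹,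
    cu_conj (mul_mem (hUN I) (hUN J)) ((Cu R).inv_mem hmem'), ?_⟩
  show U I * U J = _ * U (I + J)
  group


lemma tau_mem_N {R : Subring A} (σ : R ≃+* R) (w : Aˣ)
    (hσ : ∀ r : R, (w : A) * (r : A) * ((w⁻¹ : Aˣ) : A) = ((σ r : R) : A)) :
    w ∈ Nsub R := by
  intro x
  constructor
  · intro hx
    have h := hσ ⟨x, hx⟩
    rw [h]
    exact (σ ⟨x, hx⟩).2
  · intro hx
    have h := hσ (σ.symm ⟨_, hx⟩)
    rw [RingEquiv.apply_symm_apply] at h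
    have hcan : ((σ.symm ⟨_, hx⟩ : R) : A) = x := by
      have e : (↑(⟨(w : A) * x * ((w⁻¹ : Aˣ) : A), hx⟩ : R) : A)
          = (w : A) * x * ((w⁻¹ : Aˣ) : A) := rfl
      rw [e] at h
      have h3 : (w : A) * ((σ.symm ⟨_, hx⟩ : R) : A) = (w : A) * x := by
        have h4 := congrArg (fun z => z * (w : A)) h
        simpa [mul_assoc, Units.inv_mul_cancel_right] using h4
      exact (Units.mul_right_inj w).mp h3
    rw [← hcan]
    exact (σ.symm _).2

end Stmt14Aux


open Stmt14Aux


/-- Let `A` be a `Σ`-twisted Laurent polynomial ring in invertible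
variables `τ_1, ..., τ_k` over a coefficient subring `R`, `A_0` the span of the
monomials `τ^I`, `I ∈ ℕ^k`, and `A_j` the span of the monomials with `i_j ≥ 0`.
Then the direct sum `J_n = ⊕_j J_{n,j} : A_0/τ^n → ⊕_j A_j/τ_j^n` of the maps induced
by the inclusions is injective; element-wise: an element of `A_0` lying in
`τ_j^n A_j` for every `j` lies in `τ^n A_0`. -/
theorem stmt14 {A : Type*} [Ring A] (k : ℕ) (R : Subring A) (σ : Fin k → (R ≃+* R))
    (τ : Fin k → Aˣ)
    (hcomm : ∀ i j, ((τ i * τ j * (τ i)⁻¹ * (τ j)⁻¹ : Aˣ) : A) ∈ R)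
    (hσ : ∀ i (r : R), (τ i : A) * (r : A) * ((τ i)⁻¹ : Aˣ) = ((σ i r : R) : A))
    (mL : (Fin k →₀ ℤ) → A)
    (hmL : ∀ I, mL I = ((List.ofFn fun i => τ i ^ I i).prod : Aˣ))
    (hbasis : ∀ a : A, ∃! c : (Fin k →₀ ℤ) →₀ R,
      a = c.sum fun I r => (r : A) * mL I)
    (A0 : Set A)
    (hA0 : A0 = {a | ∃ c : (Fin k →₀ ℤ) →₀ R,
      (∀ I ∈ c.support, ∀ j, 0 ≤ I j) ∧ a = c.sum fun I r => (r : A) * mL I})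
    (Aj : Fin k → Set A)
    (hAj : ∀ j, Aj j = {a | ∃ c : (Fin k →₀ ℤ) →₀ R,
      (∀ I ∈ c.support, 0 ≤ I j) ∧ a = c.sum fun I r => (r : A) * mL I})
    (t : A) (ht : t = ((List.ofFn fun i => τ i).prod : Aˣ)) (n : ℕ) :
    ∀ a ∈ A0, (∀ j, ∃ b ∈ Aj j, a = (τ j : A) ^ n * b) →
      ∃ b ∈ A0, a = t ^ n * b := by
  classical
  intro a _ha hdiv
  set U : (Fin k →₀ ℤ) → Aˣ := fun I => (List.ofFn fun i => τ i ^ I i).prod with hUdef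
  have hmLU : ∀ I, mL I = ((U I : Aˣ) : A) := hmL
  have hτN : ∀ i, τ i ∈ Nsub R := fun i => tau_mem_N (σ i) (τ i) (hσ i)
  have hUN : ∀ I, U I ∈ Nsub R := by
    intro I
    apply list_prod_mem
    intro x hx
    simp only [hUdef, List.mem_ofFn] at hx
    obtain ⟨i, rfl⟩ := hx
    exact zpow_mem (hτN i) _
  have hCuComm : ∀ i j, (τ i * τ j * (τ i)⁻¹ * (τ j)⁻¹ : Aˣ) ∈ Cu R := by
    intro i j
    refine ⟨hcomm i j, ?_⟩
    have e : (((τ i * τ j * (τ i)⁻¹ * (τ j)⁻¹)⁻¹ : Aˣ) : A)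
        = ((τ j * τ i * (τ j)⁻¹ * (τ i)⁻¹ : Aˣ) : A) := by
      norm_cast
      group
    rw [e]; exact hcomm j i
  have hadd : ∀ I J, ∃ u ∈ Cu R, U I * U J = u * U (I + J) :=
    fun I J => main_add' hτN hCuComm I J
  choose uadd huaddC huaddE using hadd
  obtain ⟨c, hceq, hcuniq⟩ := hbasis a
  -- Step 1: every exponent appearing in `a` has all coordinates ≥ n.
  have hkey : ∀ j : Fin k, ∀ I ∈ c.support, (n : ℤ) ≤ I j := by
    intro j I hI
    obtain ⟨b, hbmem, habe⟩ := hdiv j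
    rw [hAj j] at hbmem
    obtain ⟨d, hd, hdeq⟩ := hbmem
    set w : Aˣ := τ j ^ n with hwdef
    have hwN : w ∈ Nsub R := pow_mem (hτN j) n
    have hwU : w = U (Finsupp.single j (n : ℤ)) := by
      have hrfl : U (Finsupp.single j (n : ℤ))
          = (List.ofFn fun i => τ i ^ (Finsupp.single j (n : ℤ)) i).prod := rfl
      rw [hrfl, Stmt14Aux.prod_ofFn_single (fun i => τ i ^ (Finsupp.single j (n : ℤ)) i) j ?_]
      · show w = τ j ^ (Finsupp.single j (n : ℤ)) j
        rw [Finsupp.single_eq_same, zpow_natCast]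
      · intro i hi
        show τ i ^ (Finsupp.single j (n : ℤ)) i = 1
        rw [Finsupp.single_eq_of_ne' (Ne.symm hi), zpow_zero]
    have hmemξ : ∀ (K : Fin k →₀ ℤ) (r : R),
        ((w : A) * (r : A) * ((w⁻¹ : Aˣ) : A)) * ((uadd (Finsupp.single j (n : ℤ)) K : Aˣ) : A) ∈ R :=
      fun K r => R.mul_mem ((hwN (r : A)).mp r.2) (huaddC _ _).1
    set ξ : (Fin k →₀ ℤ) → R → R := fun K r => ⟨_, hmemξ K r⟩ with hξ
    have hterm : ∀ (K : Fin k →₀ ℤ) (r : R), (w : A) * ((r : A) * ((U K : Aˣ) : A))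
        = ((ξ K r : R) : A) * ((U (Finsupp.single j (n : ℤ) + K) : Aˣ) : A) := by
      intro K r
      have h1 : (w : Aˣ) * U K
          = uadd (Finsupp.single j (n : ℤ)) K * U (Finsupp.single j (n : ℤ) + K) := by
        rw [hwU]; exact huaddE _ _
      have h1A : (w : A) * ((U K : Aˣ) : A)
          = ((uadd (Finsupp.single j (n : ℤ)) K : Aˣ) : A)
            * ((U (Finsupp.single j (n : ℤ) + K) : Aˣ) : A) := by
        have := congrArg Units.val h1
        push_cast at this
        exact this
      calc (w : A) * ((r : A) * ((U K : Aˣ) : A))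
          = ((w : A) * (r : A) * ((w⁻¹ : Aˣ) : A)) * ((w : A) * ((U K : Aˣ) : A)) := by
            simp [mul_assoc, Units.inv_mul_cancel_left]
        _ = ((w : A) * (r : A) * ((w⁻¹ : Aˣ) : A))
            * (((uadd (Finsupp.single j (n : ℤ)) K : Aˣ) : A)
              * ((U (Finsupp.single j (n : ℤ) + K) : Aˣ) : A)) := by rw [h1A]
        _ = ((ξ K r : R) : A) * ((U (Finsupp.single j (n : ℤ) + K) : Aˣ) : A) := by
            rw [← mul_assoc]
    set e : (Fin k →₀ ℤ) →₀ R :=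
      d.sum fun K r => Finsupp.single (Finsupp.single j (n : ℤ) + K) (ξ K r) with hedef
    have haeq2 : a = e.sum fun I r => (r : A) * mL I := by
      have h0 : ∀ K : Fin k →₀ ℤ, ((0 : R) : A) * mL K = 0 := by intro K; push_cast; simp
      have h1 : ∀ (K : Fin k →₀ ℤ) (r s : R),
          ((r + s : R) : A) * mL K = (r : A) * mL K + (s : A) * mL K := by
        intro K r s; push_cast; rw [add_mul]
      rw [hedef, Finsupp.sum_sum_index h0 h1]
      rw [habe, hdeq, Finsupp.mul_sum]
      apply Finsupp.sum_congr
      intro K hK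
      rw [Finsupp.sum_single_index (h0 _)]
      rw [hmLU, hmLU]
      have hp : (τ j : A) ^ n = (w : A) := by
        rw [hwdef]; exact (Units.val_pow_eq_pow_val _ _).symm
      rw [hp]
      exact hterm K (d K)
    have hec : e = c := hcuniq e haeq2
    rw [← hec] at hI
    have hsub := Finsupp.support_sum hI
    rw [Finset.mem_biUnion] at hsub
    obtain ⟨K, hK, hIK⟩ := hsub
    have := Finsupp.support_single_subset hIK
    rw [Finset.mem_singleton] at this
    subst this
    rw [Finsupp.add_apply, Finsupp.single_eq_same]
    have := hd K hK
    omega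
  -- Step 2: construct b.
  set ones : Fin k →₀ ℤ := Finsupp.equivFunOnFinite.symm (fun _ => (1 : ℤ)) with honesdef
  have hones : ∀ i, ones i = 1 := fun i => rfl
  set tU : Aˣ := (List.ofFn fun i => τ i).prod with htUdef
  have htA : t = (tU : A) := ht
  have hUones : U ones = tU := by
    rw [htUdef]
    have hrfl : U ones = (List.ofFn fun i => τ i ^ ones i).prod := rfl
    rw [hrfl]
    rw [show (fun i => τ i ^ ones i) = fun i => τ i from funext fun i => by
      rw [hones, zpow_one]]
  have htUN : tU ∈ Nsub R := by rw [← hUones]; exact hUN ones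
  have hU0 : U 0 = 1 := by
    have hrfl : U 0 = (List.ofFn fun i => τ i ^ (0 : Fin k →₀ ℤ) i).prod := rfl
    rw [hrfl]
    apply List.prod_eq_one
    intro x hx
    simp only [List.mem_ofFn] at hx
    obtain ⟨i, rfl⟩ := hx
    show τ i ^ (0 : Fin k →₀ ℤ) i = 1
    simp
  have hpow : ∀ m : ℕ, ∃ u ∈ Cu R, tU ^ m = u * U (m • ones) := by
    intro m
    induction m with
    | zero =>
      refine ⟨1, one_mem _, ?_⟩
      rw [pow_zero, zero_smul, hU0, one_mul]
    | succ m ih =>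
      obtain ⟨u, hu, he⟩ := ih
      refine ⟨u * uadd (m • ones) ones, mul_mem hu (huaddC _ _), ?_⟩
      have harg : m • ones + ones = (m + 1) • ones := by rw [succ_nsmul]
      rw [pow_succ, he, ← hUones, mul_assoc, huaddE, harg, ← mul_assoc]
  obtain ⟨ut, hutC, hutE⟩ := hpow n
  set v : (Fin k →₀ ℤ) → Aˣ := fun I => ut * uadd (n • ones) (I - n • ones) with hvdef
  have hvC : ∀ I, v I ∈ Cu R := fun I => mul_mem hutC (huaddC _ _)
  have hvE : ∀ I : Fin k →₀ ℤ, tU ^ n * U (I - n • ones) = v I * U I := by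
    intro I
    have harg : n • ones + (I - n • ones) = I := by abel
    rw [hutE, mul_assoc, huaddE, harg, ← mul_assoc]
  have htUnN : (tU ^ n : Aˣ) ∈ Nsub R := pow_mem htUN n
  have htUnN' : ((tU ^ n)⁻¹ : Aˣ) ∈ Nsub R := inv_mem htUnN
  have hmemξ : ∀ (I : Fin k →₀ ℤ) (r : R),
      (((tU ^ n)⁻¹ : Aˣ) : A) * ((r : A) * (((v I)⁻¹ : Aˣ) : A)) * ((tU ^ n : Aˣ) : A) ∈ R := by
    intro I r
    have hy : (r : A) * (((v I)⁻¹ : Aˣ) : A) ∈ R := R.mul_mem r.2 ((Cu R).inv_mem (hvC I)).1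
    have h7 := (htUnN' _).mp hy
    simpa using h7
  set ξ : (Fin k →₀ ℤ) → R → R := fun I r => ⟨_, hmemξ I r⟩ with hξdef
  have hterm : ∀ (I : Fin k →₀ ℤ) (r : R),
      ((tU ^ n : Aˣ) : A) * (((ξ I r : R) : A) * ((U (I - n • ones) : Aˣ) : A))
        = (r : A) * ((U I : Aˣ) : A) := by
    intro I r
    have hA2 : ((tU ^ n : Aˣ) : A) * ((U (I - n • ones) : Aˣ) : A)
        = ((v I : Aˣ) : A) * ((U I : Aˣ) : A) := by
      have h8 := congrArg Units.val (hvE I)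
      rw [Units.val_mul, Units.val_mul] at h8
      exact h8
    show ((tU ^ n : Aˣ) : A) *
        (((((tU ^ n)⁻¹ : Aˣ) : A) * ((r : A) * (((v I)⁻¹ : Aˣ) : A)) * ((tU ^ n : Aˣ) : A))
          * ((U (I - n • ones) : Aˣ) : A)) = (r : A) * ((U I : Aˣ) : A)
    simp only [mul_assoc]
    rw [Units.mul_inv_cancel_left, hA2, Units.inv_mul_cancel_left]
  set e' : (Fin k →₀ ℤ) →₀ R :=
    c.sum fun K r => Finsupp.single (K - n • ones) (ξ K r) with hedef'
  refine ⟨e'.sum fun I r => (r : A) * mL I, ?_, ?_⟩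
  · rw [hA0]
    refine ⟨e', ?_, rfl⟩
    intro I' hI' j
    have hsub := Finsupp.support_sum hI'
    rw [Finset.mem_biUnion] at hsub
    obtain ⟨K, hK, hIK⟩ := hsub
    have h5 := Finsupp.support_single_subset hIK
    rw [Finset.mem_singleton] at h5
    subst h5
    have h6 : (K - n • ones) j = K j - n := by
      rw [Finsupp.sub_apply, Finsupp.smul_apply, hones]
      simp
    rw [h6]
    have h9 := hkey j K hK
    omega
  · have h0 : ∀ K : Fin k →₀ ℤ, t ^ n * (((0 : R) : A) * mL K) = 0 := by
      intro K; push_cast; simp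
    have h1 : ∀ (K : Fin k →₀ ℤ) (r s : R),
        t ^ n * (((r + s : R) : A) * mL K)
          = t ^ n * ((r : A) * mL K) + t ^ n * ((s : A) * mL K) := by
      intro K r s; push_cast; rw [add_mul, mul_add]
    rw [Finsupp.mul_sum, hedef', Finsupp.sum_sum_index h0 h1, hceq]
    apply Finsupp.sum_congr
    intro K hK
    rw [Finsupp.sum_single_index (h0 _)]
    rw [hmLU, hmLU, htA, ← Units.val_pow_eq_pow_val]
    exact (hterm K (c K)).symm
end

section
/- Let A be a Σ-twisted polynomial ring in τ_1, ..., τ_k over R, τ = τ_1⋯τ_k, Â = lim← A/τ^n, and for j ∈ {1,...,k} let Â_j = lim← A_j/τ_j^n where A_j is the subring of the associated twisted Laurent polynomial ring spanned by monomials τ^I with i_j ≥ 0. Then for every j the natural ring homomorphism Ĵ_j : Â → Â_j is injective. -/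
private lemma listProd_pow_add {G : Type*} [Group G] :
    ∀ {k : ℕ} (g : Fin k → G), (∀ i j, Commute (g i) (g j)) → ∀ (V W : Fin k → ℤ),
    (List.ofFn fun i => g i ^ (V i + W i)).prod
      = (List.ofFn fun i => g i ^ V i).prod * (List.ofFn fun i => g i ^ W i).prod
  | 0, g, _, V, W => by simp
  | (k+1), g, hg, V, W => by
    rw [List.ofFn_succ, List.ofFn_succ, List.ofFn_succ, List.prod_cons, List.prod_cons,
      List.prod_cons, zpow_add,
      listProd_pow_add (fun i => g i.succ) (fun i j => hg i.succ j.succ)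
        (fun i => V i.succ) (fun i => W i.succ)]
    have hc : Commute (g 0 ^ W 0) ((List.ofFn fun i : Fin k => g i.succ ^ V i.succ).prod) := by
      apply Commute.list_prod_right
      intro y hy
      rw [List.mem_ofFn] at hy
      obtain ⟨i, rfl⟩ := hy
      exact (hg 0 i.succ).zpow_zpow _ _
    calc g 0 ^ V 0 * g 0 ^ W 0 *
          ((List.ofFn fun i : Fin k => g i.succ ^ V i.succ).prod *
            (List.ofFn fun i : Fin k => g i.succ ^ W i.succ).prod)
        = g 0 ^ V 0 * (g 0 ^ W 0 * (List.ofFn fun i : Fin k => g i.succ ^ V i.succ).prod) *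
            (List.ofFn fun i : Fin k => g i.succ ^ W i.succ).prod := by
          simp [mul_assoc]
      _ = _ := by rw [hc.eq]; simp [mul_assoc]

private lemma listProd_pow_single {G : Type*} [Group G] :
    ∀ {k : ℕ} (g : Fin k → G) (j : Fin k) (m : ℤ),
    (List.ofFn fun i => g i ^ (if j = i then m else 0)).prod = g j ^ m
  | 0, _, j, _ => j.elim0
  | (k+1), g, j, m => by
    rw [List.ofFn_succ, List.prod_cons]
    induction j using Fin.cases with
    | zero =>
      have h1 : ∀ i : Fin k, (if (0 : Fin (k+1)) = i.succ then m else 0) = 0 := by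
        intro i; rw [if_neg (Fin.succ_ne_zero i).symm]
      simp only [h1, zpow_zero]
      rw [if_true, List.prod_eq_one (fun x hx => by
        rw [List.mem_ofFn] at hx; obtain ⟨i, rfl⟩ := hx; rfl), mul_one]
    | succ j' =>
      have h1 : ∀ i : Fin k, (if j'.succ = i.succ then m else 0) = (if j' = i then m else 0) := by
        intro i
        by_cases h : j' = i
        · rw [if_pos h, if_pos (by rw [h])]
        · rw [if_neg h, if_neg (fun hc => h (Fin.succ_injective _ hc))]
      rw [if_neg (Fin.succ_ne_zero j'), zpow_zero, one_mul]
      simp only [h1]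
      exact listProd_pow_single (fun i => g i.succ) j' m



/-- In the setting of a `Σ`-twisted Laurent polynomial ring `A` over `R`
with twisted polynomial subring `A_0` and subrings `A_j` spanned by the monomials with
`i_j ≥ 0`, the natural ring homomorphism `Ĵ_j : Â = lim← A_0/τ^n → Â_j = lim← A_j/τ_j^n`
is injective for every `j`. Element-wise: a compatible sequence in `A_0` (modulo
`τ^n A_0`) whose components all vanish in `A_j/τ_j^n A_j` vanishes in the limit. -/
theorem stmt16 {A : Type*} [Ring A] (k : ℕ) (R : Subring A) (σ : Fin k → (R ≃+* R))
    (τ : Fin k → Aˣ)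
    (hcomm : ∀ i j, ((τ i * τ j * (τ i)⁻¹ * (τ j)⁻¹ : Aˣ) : A) ∈ R)
    (hσ : ∀ i (r : R), (τ i : A) * (r : A) * ((τ i)⁻¹ : Aˣ) = ((σ i r : R) : A))
    (mL : (Fin k →₀ ℤ) → A)
    (hmL : ∀ I, mL I = ((List.ofFn fun i => τ i ^ I i).prod : Aˣ))
    (hbasis : ∀ a : A, ∃! c : (Fin k →₀ ℤ) →₀ R,
      a = c.sum fun I r => (r : A) * mL I)
    (A0 : Set A)
    (hA0 : A0 = {a | ∃ c : (Fin k →₀ ℤ) →₀ R,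
      (∀ I ∈ c.support, ∀ j, 0 ≤ I j) ∧ a = c.sum fun I r => (r : A) * mL I})
    (Aj : Fin k → Set A)
    (hAj : ∀ j, Aj j = {a | ∃ c : (Fin k →₀ ℤ) →₀ R,
      (∀ I ∈ c.support, 0 ≤ I j) ∧ a = c.sum fun I r => (r : A) * mL I})
    (t : A) (ht : t = ((List.ofFn fun i => τ i).prod : Aˣ))
    (j : Fin k) (a : ℕ → A)
    -- `a` represents an element of Â : components in A_0, compatible modulo τ^n A_0
    (ha0 : ∀ n, a n ∈ A0)
    (hcompat : ∀ n, ∃ y ∈ A0, a (n + 1) - a n = t ^ n * y)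
    -- the image of `a` under Ĵ_j vanishes
    (hker : ∀ n, ∃ b ∈ Aj j, a n = (τ j : A) ^ n * b) :
    -- then `a` vanishes in Â
    ∀ n, ∃ y ∈ A0, a n = t ^ n * y := by
  classical
  -- coefficient function
  choose coeff hcoeff using hbasis
  have hrepr : ∀ x : A, x = (coeff x).sum fun I r => (r : A) * mL I := fun x => (hcoeff x).1
  have huniq : ∀ (x : A) (c), x = (c.sum fun I r => (r : A) * mL I) → c = coeff x :=
    fun x c h => (hcoeff x).2 c h
  have hczero : coeff (0 : A) = 0 := (huniq 0 0 (by simp)).symm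
  have hcadd : ∀ x y : A, coeff (x + y) = coeff x + coeff y := by
    intro x y
    refine (huniq _ _ ?_).symm
    rw [Finsupp.sum_add_index' (fun I => by simp) (fun I r s => by push_cast; rw [add_mul])]
    rw [← hrepr x, ← hrepr y]
  let coeffHom : A →+ ((Fin k →₀ ℤ) →₀ R) :=
    { toFun := coeff, map_zero' := hczero, map_add' := hcadd }
  have hcsingle : ∀ (I : Fin k →₀ ℤ) (r : R), coeff ((r : A) * mL I) = Finsupp.single I r := by
    intro I r
    refine (huniq _ _ ?_).symm
    rw [Finsupp.sum_single_index (by simp)]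
  -- membership characterizations
  have hA0mem : ∀ x : A, x ∈ A0 ↔ ∀ I ∈ (coeff x).support, ∀ i, 0 ≤ I i := by
    intro x
    rw [hA0]
    constructor
    · rintro ⟨c, hc, hx⟩
      rw [← huniq x c hx]; exact hc
    · intro h
      exact ⟨coeff x, h, hrepr x⟩
  have hAjmem : ∀ x : A, x ∈ Aj j ↔ ∀ I ∈ (coeff x).support, 0 ≤ I j := by
    intro x
    rw [hAj j]
    constructor
    · rintro ⟨c, hc, hx⟩
      rw [← huniq x c hx]; exact hc
    · intro h
      exact ⟨coeff x, h, hrepr x⟩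
  -- units machinery
  let M : (Fin k →₀ ℤ) → Aˣ := fun I => (List.ofFn fun i => τ i ^ I i).prod
  have hmLM : ∀ I, mL I = ((M I : Aˣ) : A) := fun I => hmL I
  let U : Subgroup Aˣ :=
    { carrier := {u : Aˣ | ((u : A) ∈ R) ∧ (((u⁻¹ : Aˣ) : A) ∈ R)}
      mul_mem' := by
        rintro x y ⟨hx1, hx2⟩ ⟨hy1, hy2⟩
        exact ⟨by rw [Units.val_mul]; exact R.mul_mem hx1 hy1,
          by rw [mul_inv_rev, Units.val_mul]; exact R.mul_mem hy2 hx2⟩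
      one_mem' := ⟨by simpa using R.one_mem, by simpa using R.one_mem⟩
      inv_mem' := by rintro x ⟨h1, h2⟩; exact ⟨h2, by rw [inv_inv]; exact h1⟩ }
  have hUmem : ∀ u : Aˣ, u ∈ U ↔ ((u : A) ∈ R) ∧ (((u⁻¹ : Aˣ) : A) ∈ R) := fun u => Iff.rfl
  let T : Subgroup Aˣ := Subgroup.closure (Set.range τ ∪ (U : Set Aˣ))
  have hτT : ∀ i, τ i ∈ T := fun i => Subgroup.subset_closure (Or.inl ⟨i, rfl⟩)
  have hτconj : ∀ i, ∀ r ∈ R, (τ i : A) * r * (((τ i)⁻¹ : Aˣ) : A) ∈ R := by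
    intro i r hr
    rw [hσ i ⟨r, hr⟩]
    exact (σ i ⟨r, hr⟩).2
  have hτconj' : ∀ i, ∀ r ∈ R, (((τ i)⁻¹ : Aˣ) : A) * r * (τ i : A) ∈ R := by
    intro i r hr
    have h1 := hσ i ((σ i).symm ⟨r, hr⟩)
    rw [RingEquiv.apply_symm_apply] at h1
    have h3 := congrArg (fun z => (((τ i)⁻¹ : Aˣ) : A) * z * (τ i : A)) h1
    simp only at h3
    rw [mul_assoc ((τ i : A)), Units.inv_mul_cancel_left, Units.inv_mul_cancel_right] at h3
    rw [← h3]
    exact ((σ i).symm ⟨r, hr⟩).2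
  have hTconj : ∀ w : Aˣ, w ∈ T →
      (∀ r ∈ R, (w : A) * r * ((w⁻¹ : Aˣ) : A) ∈ R) ∧
      (∀ r ∈ R, ((w⁻¹ : Aˣ) : A) * r * (w : A) ∈ R) := by
    intro w hw
    induction hw using Subgroup.closure_induction with
    | mem x hx =>
      rcases hx with ⟨i, rfl⟩ | hx
      · exact ⟨hτconj i, hτconj' i⟩
      · obtain ⟨h1, h2⟩ := hx
        exact ⟨fun r hr => R.mul_mem (R.mul_mem h1 hr) h2,
               fun r hr => R.mul_mem (R.mul_mem h2 hr) h1⟩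
    | one => constructor <;> intro r hr <;> simpa using hr
    | mul x y hx hy px py =>
      refine ⟨fun r hr => ?_, fun r hr => ?_⟩
      · have h := px.1 _ (py.1 r hr)
        have e : ((x * y : Aˣ) : A) * r * ((((x * y)⁻¹ : Aˣ)) : A)
            = (x : A) * ((y : A) * r * ((y⁻¹ : Aˣ) : A)) * ((x⁻¹ : Aˣ) : A) := by
          rw [mul_inv_rev, Units.val_mul, Units.val_mul]; noncomm_ring
        rw [e]; exact h
      · have h := py.2 _ (px.2 r hr)
        have e : ((((x * y)⁻¹ : Aˣ)) : A) * r * ((x * y : Aˣ) : A)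
            = ((y⁻¹ : Aˣ) : A) * (((x⁻¹ : Aˣ) : A) * r * (x : A)) * (y : A) := by
          rw [mul_inv_rev, Units.val_mul, Units.val_mul]; noncomm_ring
        rw [e]; exact h
    | inv x hx px =>
      exact ⟨fun r hr => by rw [inv_inv]; exact px.2 r hr,
             fun r hr => by rw [inv_inv]; exact px.1 r hr⟩
  haveI hN : (U.subgroupOf T).Normal := by
    constructor
    intro u hu g
    rw [Subgroup.mem_subgroupOf] at hu ⊢
    obtain ⟨h1, h2⟩ := hu
    have hg := hTconj (g : Aˣ) g.2
    refine ⟨?_, ?_⟩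
    · have e : (((g * u * g⁻¹ : T) : Aˣ) : A)
          = ((g : Aˣ) : A) * (((u : Aˣ)) : A) * ((((g : Aˣ))⁻¹ : Aˣ) : A) := by
        simp [Units.val_mul]
      rw [e]; exact hg.1 _ h1
    · have e : (((((g * u * g⁻¹ : T) : Aˣ))⁻¹ : Aˣ) : A)
          = ((g : Aˣ) : A) * ((((u : Aˣ))⁻¹ : Aˣ) : A) * ((((g : Aˣ))⁻¹ : Aˣ) : A) := by
        simp [Units.val_mul, mul_inv_rev, mul_assoc]
      rw [e]; exact hg.1 _ h2
  let Q := T ⧸ U.subgroupOf T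
  let π : T →* Q := QuotientGroup.mk' (U.subgroupOf T)
  let τT : Fin k → T := fun i => ⟨τ i, hτT i⟩
  let gq : Fin k → Q := fun i => π (τT i)
  have hgcomm : ∀ i i', Commute (gq i) (gq i') := by
    intro i i'
    rw [← commutatorElement_eq_one_iff_commute, commutatorElement_def]
    have e : gq i * gq i' * (gq i)⁻¹ * (gq i')⁻¹
        = π (τT i * τT i' * (τT i)⁻¹ * (τT i')⁻¹) := by
      simp [map_mul, map_inv]; rfl
    rw [e]
    refine (QuotientGroup.eq_one_iff _).mpr ?_
    rw [Subgroup.mem_subgroupOf]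
    refine ⟨?_, ?_⟩
    · show ((τ i * τ i' * (τ i)⁻¹ * (τ i')⁻¹ : Aˣ) : A) ∈ R
      exact hcomm i i'
    · show ((((τ i * τ i' * (τ i)⁻¹ * (τ i')⁻¹ : Aˣ))⁻¹ : Aˣ) : A) ∈ R
      have e2 : ((τ i * τ i' * (τ i)⁻¹ * (τ i')⁻¹ : Aˣ))⁻¹
          = τ i' * τ i * (τ i')⁻¹ * (τ i)⁻¹ := by group
      rw [e2]
      exact hcomm i' i
  let MT : (Fin k →₀ ℤ) → T := fun I => (List.ofFn fun i => τT i ^ I i).prod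
  have hMTval : ∀ I, ((MT I : T) : Aˣ) = M I := by
    intro I
    show T.subtype ((List.ofFn fun i => τT i ^ I i).prod) = _
    rw [map_list_prod, List.map_ofFn]
    show (List.ofFn fun i => T.subtype (τT i ^ I i)).prod = (List.ofFn fun i => τ i ^ I i).prod
    exact congrArg (fun f => (List.ofFn f).prod)
      (funext fun i => by rw [map_zpow]; rfl)
  have hMmemT : ∀ I, M I ∈ T := fun I => by rw [← hMTval I]; exact (MT I).2
  have hπMT : ∀ I, π (MT I) = (List.ofFn fun i => gq i ^ I i).prod := by
    intro I
    show π ((List.ofFn fun i => τT i ^ I i).prod) = _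
    rw [map_list_prod, List.map_ofFn]
    exact congrArg (fun f => (List.ofFn f).prod)
      (funext fun i => by rw [Function.comp_apply, map_zpow])
  have hkey : ∀ V W : Fin k →₀ ℤ, (M V * M W * (M (V + W))⁻¹ : Aˣ) ∈ U := by
    intro V W
    have hq : π (MT V * MT W * (MT (V + W))⁻¹) = 1 := by
      rw [map_mul, map_mul, map_inv, hπMT, hπMT, hπMT, mul_inv_eq_one,
        ← listProd_pow_add gq hgcomm (fun i => V i) (fun i => W i)]
      exact congrArg (fun f => (List.ofFn f).prod)
        (funext fun i => by rw [Finsupp.add_apply])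
    have hm : (MT V * MT W * (MT (V + W))⁻¹ : T) ∈ U.subgroupOf T :=
      (QuotientGroup.eq_one_iff _).mp hq
    rw [Subgroup.mem_subgroupOf] at hm
    have e : ((MT V * MT W * (MT (V + W))⁻¹ : T) : Aˣ) = M V * M W * (M (V + W))⁻¹ := by
      rw [show ((MT V * MT W * (MT (V + W))⁻¹ : T) : Aˣ)
          = (MT V : Aˣ) * (MT W : Aˣ) * ((MT (V + W) : Aˣ))⁻¹ from rfl,
        hMTval, hMTval, hMTval]
    rwa [e] at hm
  have hkey2 : ∀ (j' : Fin k) (m : ℤ) (I : Fin k →₀ ℤ),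
      (τ j' ^ m * M I * (M (Finsupp.single j' m + I))⁻¹ : Aˣ) ∈ U := by
    intro j' m I
    have hq : π (τT j' ^ m * MT I * (MT (Finsupp.single j' m + I))⁻¹) = 1 := by
      rw [map_mul, map_mul, map_inv, map_zpow, hπMT, hπMT, mul_inv_eq_one]
      have h2 : (gq j') ^ m = (List.ofFn fun i => gq i ^ ((Finsupp.single j' m) i)).prod := by
        rw [← listProd_pow_single gq j' m]
        exact congrArg (fun f => (List.ofFn f).prod)
          (funext fun i => by rw [Finsupp.single_apply])
      show (gq j') ^ m * (List.ofFn fun i => gq i ^ I i).prod = _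
      rw [h2, ← listProd_pow_add gq hgcomm (fun i => (Finsupp.single j' m) i) (fun i => I i)]
      exact congrArg (fun f => (List.ofFn f).prod)
        (funext fun i => by rw [Finsupp.add_apply])
    have hm := (QuotientGroup.eq_one_iff _).mp hq
    rw [Subgroup.mem_subgroupOf] at hm
    have e : ((τT j' ^ m * MT I * (MT (Finsupp.single j' m + I))⁻¹ : T) : Aˣ)
        = τ j' ^ m * M I * (M (Finsupp.single j' m + I))⁻¹ := by
      rw [show ((τT j' ^ m * MT I * (MT (Finsupp.single j' m + I))⁻¹ : T) : Aˣ)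
          = ((τT j' ^ m : T) : Aˣ) * (MT I : Aˣ) * ((MT (Finsupp.single j' m + I) : Aˣ))⁻¹ from rfl,
        hMTval, hMTval]
      congr 1
    rwa [e] at hm
  -- the shift lemma
  have hshift : ∀ (w : Aˣ) (V : Fin k →₀ ℤ),
      (∀ r ∈ R, (w : A) * r * ((w⁻¹ : Aˣ) : A) ∈ R) →
      (∀ I, ((w * M I * (M (V + I))⁻¹ : Aˣ) : A) ∈ R) →
      ∀ (r : R) (I : Fin k →₀ ℤ), ∃ r' : R,
        (w : A) * ((r : A) * mL I) = (r' : A) * mL (V + I) := by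
    intro w V hw1 hw2 r I
    refine ⟨⟨_, R.mul_mem (hw1 r r.2) (hw2 I)⟩, ?_⟩
    show (w : A) * ((r : A) * mL I)
        = ((w : A) * (r : A) * ((w⁻¹ : Aˣ) : A)) * ((w * M I * (M (V + I))⁻¹ : Aˣ) : A)
          * mL (V + I)
    rw [hmLM, hmLM, Units.val_mul, Units.val_mul]
    simp [mul_assoc]
  -- support shifting
  have hmulsupp : ∀ (w : Aˣ) (V : Fin k →₀ ℤ),
      (∀ (r : R) (I : Fin k →₀ ℤ), ∃ r' : R,
        (w : A) * ((r : A) * mL I) = (r' : A) * mL (V + I)) →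
      ∀ x : A, ∀ I ∈ (coeff ((w : A) * x)).support, ∃ J ∈ (coeff x).support, I = V + J := by
    intro w V hw x I hI
    choose r' hr' using hw
    have hx : (w : A) * x = (coeff x).sum fun J r => ((r' r J : R) : A) * mL (V + J) := by
      conv_lhs => rw [hrepr x]
      rw [Finsupp.mul_sum]
      exact Finsupp.sum_congr fun J _ => hr' (coeff x J) J
    have hc : coeff ((w : A) * x)
        = (coeff x).sum fun J r => Finsupp.single (V + J) (r' r J) := by
      rw [hx]
      exact (map_finsuppSum coeffHom (coeff x) _).trans
        (Finsupp.sum_congr fun J _ => hcsingle _ _)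
    rw [hc] at hI
    have hIb := Finsupp.support_sum hI
    rw [Finset.mem_biUnion] at hIb
    obtain ⟨J, hJ, hIJ⟩ := hIb
    have h2 := Finsupp.support_single_subset hIJ
    rw [Finset.mem_singleton] at h2
    exact ⟨J, hJ, h2⟩
  -- the three instances
  let tu : Aˣ := (List.ofFn fun i => τ i).prod
  have htu : t = (tu : A) := ht
  let onevec : Fin k →₀ ℤ := Finsupp.equivFunOnFinite.symm (fun _ => 1)
  have honevec : ∀ i, onevec i = 1 := fun i => rfl
  have htuM : tu = M onevec := by
    show (List.ofFn fun i => τ i).prod = (List.ofFn fun i => τ i ^ (onevec i)).prod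
    exact congrArg (fun f => (List.ofFn f).prod)
      (funext fun i => by rw [honevec, zpow_one])
  have htuT : tu ∈ T := by rw [htuM]; exact hMmemT onevec
  have hshift1 : ∀ (r : R) (I : Fin k →₀ ℤ), ∃ r' : R,
      (tu : A) * ((r : A) * mL I) = (r' : A) * mL (onevec + I) :=
    hshift tu onevec (fun r hr => (hTconj tu htuT).1 r hr)
      (fun I => by rw [htuM]; exact ((hUmem _).mp (hkey onevec I)).1)
  have hshift2 : ∀ (r : R) (I : Fin k →₀ ℤ), ∃ r' : R,
      ((tu⁻¹ : Aˣ) : A) * ((r : A) * mL I) = (r' : A) * mL (-onevec + I) := by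
    refine hshift tu⁻¹ (-onevec) ?_ ?_
    · intro r hr
      rw [inv_inv]
      exact (hTconj tu htuT).2 r hr
    · intro I
      have hu' : (M onevec * M (-onevec + I) * (M I)⁻¹ : Aˣ) ∈ U := by
        have h := hkey onevec (-onevec + I)
        rwa [add_neg_cancel_left] at h
      have e : (tu⁻¹ * M I * (M (-onevec + I))⁻¹ : Aˣ)
          = (M onevec)⁻¹ * (M onevec * M (-onevec + I) * (M I)⁻¹)⁻¹ * (M onevec) := by
        rw [htuM]; group
      rw [e, Units.val_mul, Units.val_mul]
      exact (hTconj (M onevec) (hMmemT onevec)).2 _ ((hUmem _).mp hu').2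
  have hτjT : ∀ m : ℕ, ((τ j ^ m : Aˣ)) ∈ T := fun m => pow_mem (hτT j) m
  have hshift3 : ∀ (m : ℕ) (r : R) (I : Fin k →₀ ℤ), ∃ r' : R,
      ((τ j ^ m : Aˣ) : A) * ((r : A) * mL I)
        = (r' : A) * mL (Finsupp.single j (m : ℤ) + I) := by
    intro m
    refine hshift (τ j ^ m) (Finsupp.single j (m : ℤ))
      (fun r hr => (hTconj _ (hτjT m)).1 r hr) ?_
    intro I
    have h := hkey2 j (m : ℤ) I
    rw [zpow_natCast] at h
    exact ((hUmem _).mp h).1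
  have hsupp1 : ∀ x : A, ∀ I ∈ (coeff (t * x)).support,
      ∃ J ∈ (coeff x).support, I = onevec + J := by
    intro x
    rw [htu]
    exact hmulsupp tu onevec hshift1 x
  have hsupp2 : ∀ x : A, ∀ I ∈ (coeff (((tu⁻¹ : Aˣ) : A) * x)).support,
      ∃ J ∈ (coeff x).support, I = -onevec + J :=
    fun x => hmulsupp tu⁻¹ (-onevec) hshift2 x
  have hsupp3 : ∀ (m : ℕ) (x : A), ∀ I ∈ (coeff ((τ j : A) ^ m * x)).support,
      ∃ J ∈ (coeff x).support, I = Finsupp.single j (m : ℤ) + J := by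
    intro m x
    rw [show ((τ j : A)) ^ m = ((τ j ^ m : Aˣ) : A) from (Units.val_pow_eq_pow_val _ _).symm]
    exact hmulsupp _ _ (hshift3 m) x
  -- support of t^n-multiples
  have hpow_supp : ∀ (n : ℕ) (y : A), (∀ I ∈ (coeff y).support, ∀ i, 0 ≤ I i) →
      ∀ I ∈ (coeff (t ^ n * y)).support, ∀ i, (n : ℤ) ≤ I i := by
    intro n
    induction n with
    | zero =>
      intro y hy I hI i
      rw [pow_zero, one_mul] at hI
      exact_mod_cast hy I hI i
    | succ n ih =>
      intro y hy I hI i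
      rw [pow_succ', mul_assoc] at hI
      obtain ⟨J, hJ, rfl⟩ := hsupp1 (t ^ n * y) I hI
      have h := ih y hy J hJ i
      rw [Finsupp.add_apply, honevec]
      push_cast
      omega
  -- stability of low coefficients
  have hcsub : ∀ x y : A, coeff (x - y) = coeff x - coeff y := fun x y => map_sub coeffHom x y
  have hdiff : ∀ n m : ℕ, n ≤ m → ∀ I : Fin k →₀ ℤ, (∃ i, I i < (n : ℤ)) →
      coeff (a m) I = coeff (a n) I := by
    intro n m hnm
    induction m, hnm using Nat.le_induction with
    | base => intro I _; rfl
    | succ m hnm ih =>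
      intro I hI
      obtain ⟨i, hi⟩ := hI
      obtain ⟨y, hy, hay⟩ := hcompat m
      have h0 : coeff (a (m + 1) - a m) I = 0 := by
        rw [hay]
        by_contra hne
        have hIs : I ∈ (coeff (t ^ m * y)).support := Finsupp.mem_support_iff.mpr hne
        have h := hpow_supp m y ((hA0mem y).mp hy) I hIs i
        omega
      have h1 : coeff (a (m + 1) - a m) I = coeff (a (m + 1)) I - coeff (a m) I := by
        rw [hcsub, Finsupp.sub_apply]
      have h2 : coeff (a (m + 1)) I = coeff (a m) I := sub_eq_zero.mp (h1.symm.trans h0)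
      exact h2.trans (ih I ⟨i, hi⟩)
  -- support bound coming from the kernel condition
  have hker_supp : ∀ m : ℕ, ∀ I ∈ (coeff (a m)).support, (m : ℤ) ≤ I j := by
    intro m I hI
    obtain ⟨b, hb, hab⟩ := hker m
    rw [hab] at hI
    obtain ⟨J, hJ, rfl⟩ := hsupp3 m b I hI
    have h := (hAjmem b).mp hb J hJ
    rw [Finsupp.add_apply, Finsupp.single_apply, if_pos rfl]
    omega
  -- main support claim
  have hmain : ∀ n : ℕ, ∀ I ∈ (coeff (a n)).support, ∀ i, (n : ℤ) ≤ I i := by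
    intro n I hI i
    by_contra hlt
    push_neg at hlt
    set m : ℕ := n + (I j).toNat + 1 with hm
    have hnm : n ≤ m := by omega
    have heq : coeff (a m) I = coeff (a n) I := hdiff n m hnm I ⟨i, hlt⟩
    have hne : coeff (a n) I ≠ 0 := Finsupp.mem_support_iff.mp hI
    have hImem : I ∈ (coeff (a m)).support :=
      Finsupp.mem_support_iff.mpr (by rw [heq]; exact hne)
    have h := hker_supp m I hImem
    have h2 : (I j) ≤ ((I j).toNat : ℤ) := Int.self_le_toNat _
    omega
  -- reconstruction
  have hfinal : ∀ (n : ℕ) (x : A), (∀ I ∈ (coeff x).support, ∀ i, (n : ℤ) ≤ I i) →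
      ∃ y ∈ A0, x = t ^ n * y := by
    intro n
    induction n with
    | zero =>
      intro x hx
      exact ⟨x, (hA0mem x).mpr (fun I hI i => by exact_mod_cast hx I hI i),
        by rw [pow_zero, one_mul]⟩
    | succ n ih =>
      intro x hx
      have hxx' : x = t * (((tu⁻¹ : Aˣ) : A) * x) := by
        rw [htu, ← mul_assoc, Units.mul_inv, one_mul]
      have hx's : ∀ I ∈ (coeff (((tu⁻¹ : Aˣ) : A) * x)).support, ∀ i, (n : ℤ) ≤ I i := by
        intro I hI i
        obtain ⟨J, hJ, rfl⟩ := hsupp2 x I hI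
        have h := hx J hJ i
        rw [Finsupp.add_apply, Finsupp.neg_apply, honevec]
        push_cast at h ⊢
        omega
      obtain ⟨y, hy, hxy⟩ := ih (((tu⁻¹ : Aˣ) : A) * x) hx's
      exact ⟨y, hy, by rw [hxx', hxy, ← mul_assoc, ← pow_succ']⟩
  intro n
  exact hfinal n (a n) (hmain n)
end

section
/- Let ξ: Z^k → R be a monomorphism and Γ = (ξ_1, ..., ξ_k) a ξ-regular family. Let (t_1, ..., t_k) be the basis of Z^k dual to the basis (−ξ_1, ..., −ξ_k) of Hom(Z^k, Z), and Λ = Z[Z^k]. Then the conical completion Λ̂_Γ^- = ∩_i Λ̂_{ξ_i}^- is isomorphic to the ring Z[[[t_1, ..., t_k]]] of special power series in t_1, ..., t_k, and Λ̂_Γ = ∩_i Λ̂_{ξ_i} is isomorphic to the ring of special Laurent series. -/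
/-- The Novikov condition for formal series over the group `ℤ^k` (written additively)
with respect to a homomorphism `ξ : ℤ^k → ℝ`. -/
def NovCond18 (k : ℕ) (ξ : (Fin k → ℤ) → ℝ) (lam : (Fin k → ℤ) → ℤ) : Prop :=
  ∀ C : ℝ, {g : Fin k → ℤ | lam g ≠ 0 ∧ C ≤ ξ g}.Finite

/-- Convolution product of formal series over the group `ℤ^k`. -/
noncomputable def NovMul18 (k : ℕ) (lam mu : (Fin k → ℤ) → ℤ) : (Fin k → ℤ) → ℤ :=
  fun u => ∑ᶠ g : Fin k → ℤ, lam g * mu (u - g)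

/-- Let `ξ : ℤ^k → ℝ` be a monomorphism and `Γ = (ξ_1, ..., ξ_k)` a
`ξ`-regular family (rows of a unimodular matrix `w`, with `ξ = Σ c_i ξ_i`, `c_i > 0`).
Let `(t_1, ..., t_k)` be the basis of `ℤ^k` dual to `(−ξ_1, ..., −ξ_k)`.
Then reindexing by the basis `t` (i.e. `λ ↦ (I ↦ λ(Σ_j I_j t_j))`) identifies
`Λ̂_Γ⁻ = ∩_i Λ̂_{ξ_i}⁻` with the ring `ℤ[[[t_1, ..., t_k]]]` of special power series
and `Λ̂_Γ = ∩_i Λ̂_{ξ_i}` with the ring of special Laurent series, compatibly with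
addition and (convolution) multiplication. -/
theorem stmt18 (k : ℕ) (w : Fin k → Fin k → ℤ) (hw : IsUnit (Matrix.of w).det)
    (c : Fin k → ℝ) (hc : ∀ i, 0 < c i)
    (ξ : (Fin k → ℤ) → ℝ)
    (hξ : ∀ x, ξ x = ∑ i, c i * ∑ j, (w i j : ℝ) * (x j : ℝ))
    (hξinj : Function.Injective ξ)
    (t : Fin k → Fin k → ℤ)
    (ht : ∀ i j, ∑ l, w i l * t j l = if i = j then -1 else 0) :
    -- the reindexing map Φ
    let Φ : ((Fin k → ℤ) → ℤ) → ((Fin k → ℤ) → ℤ) :=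
      fun lam => fun I => lam (∑ j, I j • t j)
    -- the conical completions
    let ΛΓ : Set ((Fin k → ℤ) → ℤ) :=
      {lam | ∀ i, NovCond18 k (fun g => ((∑ j, w i j * g j : ℤ) : ℝ)) lam}
    let ΛΓm : Set ((Fin k → ℤ) → ℤ) :=
      {lam | lam ∈ ΛΓ ∧ ∀ g, lam g ≠ 0 → ∀ i, (∑ j, w i j * g j : ℤ) ≤ 0}
    -- special Laurent series (indices in ℤ^k, all coordinates → +∞)
    let SLau : Set ((Fin k → ℤ) → ℤ) :=
      {d | ∀ m : ℤ, {I : Fin k → ℤ | (∃ j, I j ≤ m) ∧ d I ≠ 0}.Finite}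
    -- special power series (indices in ℕ^k ⊆ ℤ^k)
    let SPow : Set ((Fin k → ℤ) → ℤ) :=
      {d | d ∈ SLau ∧ ∀ I, d I ≠ 0 → ∀ j, 0 ≤ I j}
    -- Φ identifies Λ̂_Γ with the special Laurent series and Λ̂_Γ⁻ with the special
    -- power series, compatibly with the ring structures
    (Φ '' ΛΓ = SLau) ∧ (Φ '' ΛΓm = SPow) ∧
    (∀ lam mu, Φ (lam + mu) = Φ lam + Φ mu) ∧
    (∀ lam mu, lam ∈ ΛΓ → mu ∈ ΛΓ →
      Φ (NovMul18 k lam mu) = NovMul18 k (Φ lam) (Φ mu)) := by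
  intro Φ ΛΓ ΛΓm SLau SPow
  set W : (Fin k → ℤ) → (Fin k → ℤ) := fun g i => ∑ j, w i j * g j with hWdef
  set ψ : (Fin k → ℤ) → (Fin k → ℤ) := fun I => ∑ j, I j • t j with hψdef
  have hψapp : ∀ I l, ψ I l = ∑ j, I j * t j l := by
    intro I l
    simp [hψdef, Finset.sum_apply]
  -- key computation : W (ψ I) = -I
  have hWψ : ∀ I, W (ψ I) = -I := by
    intro I
    funext i
    show (∑ j, w i j * ψ I j) = -I i
    simp only [hψapp]
    calc (∑ j, w i j * ∑ l, I l * t l j)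
        = ∑ j, ∑ l, I l * (w i j * t l j) := by
          refine Finset.sum_congr rfl fun j _ => ?_
          rw [Finset.mul_sum]
          exact Finset.sum_congr rfl fun l _ => by ring
      _ = ∑ l, ∑ j, I l * (w i j * t l j) := Finset.sum_comm
      _ = ∑ l, I l * (if i = l then -1 else 0) := by
          refine Finset.sum_congr rfl fun l _ => ?_
          rw [← Finset.mul_sum, ht i l]
      _ = -I i := by simp [mul_ite]
  -- W is injective
  have hWinj : Function.Injective W := by
    have hWm : W = (Matrix.of w).mulVec := rfl
    rw [hWm]
    intro a b h
    have := congrArg ((Matrix.of w)⁻¹).mulVec h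
    simpa [Matrix.mulVec_mulVec, Matrix.nonsing_inv_mul _ hw] using this
  -- ψ as an equivalence
  have hψW : ∀ g, ψ (-W g) = g := by
    intro g
    apply hWinj
    rw [hWψ, neg_neg]
  let e : (Fin k → ℤ) ≃ (Fin k → ℤ) :=
    ⟨ψ, fun g => -W g, fun I => by show -W (ψ I) = I; rw [hWψ, neg_neg], hψW⟩
  have hΦ : ∀ lam I, Φ lam I = lam (ψ I) := fun _ _ => rfl
  have hsub : ∀ I J, ψ (I - J) = ψ I - ψ J := by
    intro I J
    funext l
    simp only [hψapp, Pi.sub_apply, sub_mul, Finset.sum_sub_distrib]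
  -- membership transfer
  have key : ∀ lam, lam ∈ ΛΓ ↔ Φ lam ∈ SLau := by
    intro lam
    constructor
    · intro hlam m
      have hS : ∀ j : Fin k, {I : Fin k → ℤ | lam (ψ I) ≠ 0 ∧ I j ≤ m}.Finite := by
        intro j
        have hfin := hlam j (((-m : ℤ) : ℝ))
        have : {I : Fin k → ℤ | lam (ψ I) ≠ 0 ∧ I j ≤ m}
            = ψ ⁻¹' {g | lam g ≠ 0 ∧ ((-m : ℤ) : ℝ) ≤ ((∑ l, w j l * g l : ℤ) : ℝ)} := by
          ext I
          simp only [Set.mem_setOf_eq, Set.mem_preimage]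
          have h1 : (∑ l, w j l * ψ I l) = W (ψ I) j := rfl
          constructor
          · rintro ⟨h0, hle⟩
            refine ⟨h0, ?_⟩
            rw [h1, hWψ]
            exact_mod_cast (by omega : (-m : ℤ) ≤ -I j)
          · rintro ⟨h0, hle⟩
            refine ⟨h0, ?_⟩
            rw [h1, hWψ] at hle
            have : (-m : ℤ) ≤ -I j := by exact_mod_cast hle
            omega
        rw [this]
        exact hfin.preimage e.injective.injOn
      refine Set.Finite.subset (Set.finite_iUnion hS) ?_
      rintro I ⟨⟨j, hj⟩, h0⟩
      exact Set.mem_iUnion.2 ⟨j, h0, hj⟩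
    · intro hd i C
      have hfin := hd ⌊-C⌋
      have hsubset : {I : Fin k → ℤ | lam (ψ I) ≠ 0 ∧ C ≤ ((∑ l, w i l * ψ I l : ℤ) : ℝ)}
          ⊆ {I : Fin k → ℤ | (∃ j, I j ≤ ⌊-C⌋) ∧ Φ lam I ≠ 0} := by
        rintro I ⟨h0, hle⟩
        have h1 : (∑ l, w i l * ψ I l) = W (ψ I) i := rfl
        rw [h1, hWψ] at hle
        refine ⟨⟨i, ?_⟩, h0⟩
        rw [Int.le_floor]
        have : (I i : ℝ) ≤ -C := by
          have h2 : (((-I) i : ℤ) : ℝ) = -(I i : ℝ) := by simp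
          rw [h2] at hle
          linarith
        simpa using this
      have hBfin := Set.Finite.subset hfin hsubset
      have heq : {g : Fin k → ℤ | lam g ≠ 0 ∧ C ≤ ((∑ l, w i l * g l : ℤ) : ℝ)}
          = e.symm ⁻¹' {I : Fin k → ℤ | lam (ψ I) ≠ 0 ∧ C ≤ ((∑ l, w i l * ψ I l : ℤ) : ℝ)} := by
        ext g
        simp only [Set.mem_setOf_eq, Set.mem_preimage]
        have : ψ (e.symm g) = g := e.apply_symm_apply g
        rw [this]
      rw [heq]
      exact hBfin.preimage e.symm.injective.injOn
  have hΦsurj : ∀ d, d ∈ SLau → ∃ lam, Φ lam = d := by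
    intro d _
    refine ⟨fun g => d (e.symm g), ?_⟩
    funext I
    show d (e.symm (e I)) = d I
    rw [e.symm_apply_apply]
  constructor
  · ext d
    constructor
    · rintro ⟨lam, hlam, rfl⟩
      exact (key lam).1 hlam
    · intro hd
      obtain ⟨lam, rfl⟩ := hΦsurj d hd
      exact ⟨lam, (key lam).2 hd, rfl⟩
  refine ⟨?_, ?_, ?_⟩
  · ext d
    constructor
    · rintro ⟨lam, ⟨hlam, hneg⟩, rfl⟩
      refine ⟨(key lam).1 hlam, fun I h0 j => ?_⟩
      have := hneg (ψ I) h0 j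
      have h1 : (∑ l, w j l * ψ I l) = W (ψ I) j := rfl
      rw [h1, hWψ] at this
      simpa using this
    · rintro ⟨hd, hpos⟩
      obtain ⟨lam, rfl⟩ := hΦsurj d hd
      refine ⟨lam, ⟨(key lam).2 hd, fun g h0 i => ?_⟩, rfl⟩
      have hag : ψ (e.symm g) = g := e.apply_symm_apply g
      have h0' : Φ lam (e.symm g) ≠ 0 := by
        show lam (ψ (e.symm g)) ≠ 0
        rw [hag]
        exact h0
      have := hpos (e.symm g) h0' i
      have h1 : (∑ l, w i l * g l) = W g i := rfl
      rw [h1]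
      have h2 : W g i = -(e.symm g) i := by
        have h3 := hWψ (e.symm g)
        rw [hag] at h3
        exact congrFun h3 i
      show W g i ≤ 0
      omega
  · intro lam mu
    rfl
  · intro lam mu _ _
    funext I
    show (∑ᶠ g, lam g * mu (ψ I - g)) = ∑ᶠ J, lam (ψ J) * mu (ψ (I - J))
    rw [← finsum_comp_equiv e (f := fun g => lam g * mu (ψ I - g))]
    refine finsum_congr fun J => ?_
    show lam (ψ J) * mu (ψ I - ψ J) = lam (ψ J) * mu (ψ (I - J))
    rw [hsub]
end
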